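/- arXiv:2408.16242 — 4 statements merged into one kernel-verified Lean document; each statement's English description precedes it below -/
import Mathlib

section
/- Let G be a finite group and Z ≤ Z(G). For N ≤ Z, let I(G:Z)_N index the Z-orbits of conjugacy classes K with Ann_Z(K) = N. Then for any N ≤ Z, Σ_{X ≤ N} |I(G:Z)_X| = |I(G/N : Z/N)_{1}|; that is, the number of Z/N-orbit representatives of conjugacy classes of G/N with trivial Z/N-stabilizer equals the total number of Z-orbit representatives of conjugacy classes of G whose stabilizer is contained in N. -/
open scoped Pointwise BigOperators

set_option synthInstance.maxHeartbeats 1000000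
set_option maxHeartbeats 1000000

noncomputable section HaradaPreamble

/-- The semilinear anti-automorphism of the complex group algebra sending `[g]` to `[g⁻¹]`
and conjugating coefficients. -/
def gaStar {G : Type*} [Group G] (u : MonoidAlgebra ℂ G) : MonoidAlgebra ℂ G :=
  ∑ᶠ g : G, MonoidAlgebra.single g⁻¹ ((starRingEnd ℂ) (u.coeff g))

/-- Multiplication by `x` as a linear endomorphism of the center `Z(ℂG)` of the group algebra,
defined to be `0` if `x` is not central. -/
def centerMulHom {G : Type*} [Group G] (x : MonoidAlgebra ℂ G) :
    Subalgebra.center ℂ (MonoidAlgebra ℂ G) →ₗ[ℂ] Subalgebra.center ℂ (MonoidAlgebra ℂ G) :=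
  letI := Classical.dec (x ∈ Subalgebra.center ℂ (MonoidAlgebra ℂ G))
  if h : x ∈ Subalgebra.center ℂ (MonoidAlgebra ℂ G) then
    LinearMap.mulLeft ℂ (⟨x, h⟩ : Subalgebra.center ℂ (MonoidAlgebra ℂ G))
  else 0

/-- The Hermitian form `⟨u|v⟩ = tr_{Z(ℂG)}(ū v)` on the group algebra. -/
def hform {G : Type*} [Group G] (u v : MonoidAlgebra ℂ G) : ℂ :=
  LinearMap.trace ℂ _ (centerMulHom (gaStar u * v))

/-- The class sum `[K] = ∑_{x ∈ K} [x]` of a conjugacy class. -/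
def classSum {G : Type*} [Group G] (K : ConjClasses G) : MonoidAlgebra ℂ G :=
  ∑ᶠ g ∈ K.carrier, MonoidAlgebra.single g (1 : ℂ)

/-- `χ : G → ℂ` is an irreducible complex character: the trace of a finite-dimensional
complex representation which is nonzero and has no nontrivial invariant subspaces. -/
def IsIrrChar {G : Type*} [Group G] (χ : G → ℂ) : Prop :=
  ∃ (V : Type) (_ : AddCommGroup V) (_ : Module ℂ V) (_ : FiniteDimensional ℂ V)
    (ρ : Representation ℂ G V), Nontrivial V ∧
    (∀ W : Submodule ℂ V, (∀ g : G, W.map (ρ g) ≤ W) → W = ⊥ ∨ W = ⊤) ∧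
    χ = fun g => LinearMap.trace ℂ V (ρ g)

/-- The set of irreducible complex characters of `G`. -/
def irrChars (G : Type*) [Group G] : Set (G → ℂ) :=
  {χ | IsIrrChar χ}

/-- Harada's number `h(G)`: the product of all conjugacy class sizes divided by the
product of the degrees of all irreducible complex characters. -/
def haradaNumber (G : Type*) [Group G] : ℂ :=
  (∏ᶠ c : ConjClasses G, (Nat.card c.carrier : ℂ)) / ∏ᶠ χ ∈ irrChars G, χ 1

/-- `c(G) = ∏ |C_G(g_i)|`, the product of centralizer orders over conjugacy class
representatives. -/
def cG (G : Type*) [Group G] : ℕ :=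
  ∏ᶠ c : ConjClasses G, Nat.card (Subgroup.centralizer {Quotient.out c} : Subgroup G)

/-- `γ(G)`: the absolute value of the Gramian determinant of the class sums with
respect to the trace form on `Z(ℂG)`. -/
def gammaG (G : Type*) [Group G] [Finite G] : ℝ :=
  letI : Fintype (ConjClasses G) := Fintype.ofFinite _
  letI : DecidableEq (ConjClasses G) := Classical.decEq _
  ‖(Matrix.det (Matrix.of fun i j : ConjClasses G =>
    hform (classSum i) (classSum j)))‖

/-- `Ann_Z(K) = {z ∈ Z | zK = K}`, as a subgroup of `Z`. -/
def annZ {G : Type*} [Group G] (Z : Subgroup G) (K : ConjClasses G) : Subgroup ↥Z :=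
  (MulAction.stabilizer G K.carrier).comap Z.subtype

/-- The equivalence relation on conjugacy classes (satisfying `P`) given by translation
by elements of the central subgroup `Z`. -/
def zSetoid {G : Type*} [Group G] (Z : Subgroup G) (P : ConjClasses G → Prop) :
    Setoid {K : ConjClasses G // P K} where
  r K L := ∃ z ∈ Z, z • K.1.carrier = L.1.carrier
  iseqv := by
    constructor
    · exact fun K => ⟨1, one_mem Z, one_smul _ _⟩
    · rintro K L ⟨z, hz, h⟩
      exact ⟨z⁻¹, inv_mem hz, by rw [← h, inv_smul_smul]⟩
    · rintro K L M ⟨z, hz, h⟩ ⟨w, hw, h'⟩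
      exact ⟨w * z, mul_mem hw hz, by rw [mul_smul, h, h']⟩

/-- `|I(G:Z)_N|`: the number of `Z`-orbits of conjugacy classes `K` of `G` with
`Ann_Z(K) = N`. -/
def nIGZ (G : Type*) [Group G] (Z : Subgroup G) (N : Subgroup ↥Z) : ℕ :=
  Nat.card (Quotient (zSetoid Z fun K => annZ Z K = N))

/-- The index set of the basis `B(G)_φ`: `Z`-orbits of conjugacy classes `K` with
`Ann_Z(K) ≤ ker φ`. -/
abbrev RepIdx (G : Type*) [Group G] (Z : Subgroup G) (φ : ↥Z →* ℂˣ) :=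
  Quotient (zSetoid Z fun K => annZ Z K ≤ φ.ker)

/-- A chosen representative conjugacy class for each index in `RepIdx`. -/
def repClass {G : Type*} [Group G] {Z : Subgroup G} {φ : ↥Z →* ℂˣ} (o : RepIdx G Z φ) :
    ConjClasses G := (Quotient.out o).1

/-- The central idempotent `e_φ = (1/|Z|) ∑_{z ∈ Z} conj(φ(z)) [z]`. -/
def ephi {G : Type*} [Group G] (Z : Subgroup G) (φ : ↥Z →* ℂˣ) : MonoidAlgebra ℂ G :=
  (Nat.card Z : ℂ)⁻¹ • ∑ᶠ z : ↥Z, MonoidAlgebra.single (z : G) ((starRingEnd ℂ) (φ z : ℂ))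

/-- `γ_φ(G)`: the absolute value of the Gramian determinant of the family
`e_φ [K_j]`, `j ∈ I(G:Z)_X`, `X ≤ ker φ`. -/
def gammaPhi (G : Type*) [Group G] [Finite G] (Z : Subgroup G) (φ : ↥Z →* ℂˣ) : ℝ :=
  letI : Fintype (RepIdx G Z φ) := Fintype.ofFinite _
  letI : DecidableEq (RepIdx G Z φ) := Classical.decEq _
  ‖(Matrix.det (Matrix.of fun i j : RepIdx G Z φ =>
    hform (ephi Z φ * classSum (repClass i)) (ephi Z φ * classSum (repClass j))))‖

/-- `c_φ(G) = ∏_{N ≤ ker φ} ∏_{j ∈ I(G:Z)_N} |C_G(g_j)| / |Z/N|`. -/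
def cPhi (G : Type*) [Group G] (Z : Subgroup G) (φ : ↥Z →* ℂˣ) : ℚ :=
  ∏ᶠ o : RepIdx G Z φ,
    ((Nat.card (Subgroup.centralizer {Quotient.out (repClass o)} : Subgroup G) : ℚ) /
      ((annZ Z (repClass o)).index : ℚ))

/-- `μ_φ(G) = γ_φ(G) / c_φ(G)`. -/
def muPhi (G : Type*) [Group G] [Finite G] (Z : Subgroup G) (φ : ↥Z →* ℂˣ) : ℝ :=
  gammaPhi G Z φ / (cPhi G Z φ : ℝ)

/-- `κ_N(G) = ∏_{X ≤ N} |X| ^ |I(G:Z)_X|`. -/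
def kappaN (G : Type*) [Group G] (Z : Subgroup G) (N : Subgroup ↥Z) : ℕ :=
  ∏ᶠ X ∈ {X : Subgroup ↥Z | X ≤ N}, Nat.card X ^ nIGZ G Z X

end HaradaPreamble

section Stmt7Aux

variable {G : Type*} [Group G]

private lemma s7_carrier_inj : Function.Injective (ConjClasses.carrier (α := G)) := by
  intro K L h
  obtain ⟨a, rfl⟩ := K.exists_rep
  exact ConjClasses.mem_carrier_iff_mk_eq.mp (h ▸ ConjClasses.mem_carrier_mk)

private lemma s7_key (m : G) (hm : ∀ x : G, x * m = m * x) (c a : G) :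
    c * (m * a) * c⁻¹ = m * (c * a * c⁻¹) := by
  calc c * (m * a) * c⁻¹ = (c * m * c⁻¹) * (c * a * c⁻¹) := by group
    _ = m * (c * a * c⁻¹) := by rw [hm c, mul_inv_cancel_right]

private lemma s7_conj_shift (m : G) (hm : ∀ x : G, x * m = m * x) (a b : G) :
    IsConj (m * a) (m * b) ↔ IsConj a b := by
  constructor
  · intro h
    obtain ⟨c, hc⟩ := isConj_iff.mp h
    rw [s7_key m hm c a] at hc
    exact isConj_iff.mpr ⟨c, mul_left_cancel hc⟩
  · intro h
    obtain ⟨c, hc⟩ := isConj_iff.mp h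
    exact isConj_iff.mpr ⟨c, by rw [s7_key m hm c a, hc]⟩

private lemma s7_smul_carrier {z : G} (hz : ∀ x : G, x * z = z * x) (g : G) :
    z • (ConjClasses.mk g).carrier = (ConjClasses.mk (z * g)).carrier := by
  ext x
  rw [Set.mem_smul_set_iff_inv_smul_mem, smul_eq_mul, ConjClasses.mem_carrier_iff_mk_eq,
    ConjClasses.mem_carrier_iff_mk_eq, ConjClasses.mk_eq_mk_iff_isConj,
    ConjClasses.mk_eq_mk_iff_isConj]
  have h := s7_conj_shift z hz (z⁻¹ * x) g
  rw [show z * (z⁻¹ * x) = x by group] at h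
  exact h.symm

private lemma s7_mem_annZ {Z : Subgroup G} (hZ : Z ≤ Subgroup.center G) (z : ↥Z) (g : G) :
    z ∈ annZ Z (ConjClasses.mk g) ↔ IsConj ((z : G) * g) g := by
  have hz : ∀ x : G, x * (z : G) = (z : G) * x := fun x =>
    Subgroup.mem_center_iff.mp (hZ z.2) x
  show (z : G) ∈ MulAction.stabilizer G (ConjClasses.mk g).carrier ↔ _
  rw [MulAction.mem_stabilizer_iff, s7_smul_carrier hz g]
  constructor
  · exact fun h => ConjClasses.mk_eq_mk_iff_isConj.mp (s7_carrier_inj h)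
  · exact fun h => congrArg ConjClasses.carrier (ConjClasses.mk_eq_mk_iff_isConj.mpr h)

private lemma s7_rel_iff {Z : Subgroup G} (hZ : Z ≤ Subgroup.center G)
    {P : ConjClasses G → Prop} (K L : {K : ConjClasses G // P K}) (a b : G)
    (ha : K.1 = ConjClasses.mk a) (hb : L.1 = ConjClasses.mk b) :
    (zSetoid Z P).r K L ↔ ∃ z ∈ Z, IsConj (z * a) b := by
  show (∃ z ∈ Z, z • K.1.carrier = L.1.carrier) ↔ _
  rw [ha, hb]
  constructor
  · rintro ⟨z, hzZ, h⟩
    rw [s7_smul_carrier (fun x => Subgroup.mem_center_iff.mp (hZ hzZ) x) a] at h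
    exact ⟨z, hzZ, ConjClasses.mk_eq_mk_iff_isConj.mp (s7_carrier_inj h)⟩
  · rintro ⟨z, hzZ, h⟩
    refine ⟨z, hzZ, ?_⟩
    rw [s7_smul_carrier (fun x => Subgroup.mem_center_iff.mp (hZ hzZ) x) a]
    exact congrArg ConjClasses.carrier (ConjClasses.mk_eq_mk_iff_isConj.mpr h)

private lemma s7_ann_rel {Z : Subgroup G} (hZ : Z ≤ Subgroup.center G)
    {P : ConjClasses G → Prop} (K L : {K : ConjClasses G // P K})
    (h : (zSetoid Z P).r K L) : annZ Z K.1 = annZ Z L.1 := by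
  obtain ⟨a, ha⟩ := K.1.exists_rep
  obtain ⟨b, hb⟩ := L.1.exists_rep
  rw [s7_rel_iff hZ K L a b ha.symm hb.symm] at h
  obtain ⟨z, hzZ, hconj⟩ := h
  have hzc : ∀ x : G, x * z = z * x := fun x => Subgroup.mem_center_iff.mp (hZ hzZ) x
  rw [← ha, ← hb, ← ConjClasses.mk_eq_mk_iff_isConj.mpr hconj]
  ext w
  rw [s7_mem_annZ hZ w a, s7_mem_annZ hZ w (z * a)]
  have h2 := s7_conj_shift z hzc ((w : G) * a) a
  rw [show (w : G) * (z * a) = z * ((w : G) * a) by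
    rw [← mul_assoc, hzc (w : G), mul_assoc]]
  exact (h2).symm

private lemma s7_isConj_quot (M : Subgroup G) [M.Normal] (hM : M ≤ Subgroup.center G)
    (a b : G) :
    IsConj (QuotientGroup.mk' M a) (QuotientGroup.mk' M b) ↔ ∃ m ∈ M, IsConj a (m * b) := by
  constructor
  · intro h
    obtain ⟨c', hc⟩ := isConj_iff.mp h
    obtain ⟨c, rfl⟩ := QuotientGroup.mk'_surjective M c'
    have h2 : QuotientGroup.mk' M (c * a * c⁻¹) = QuotientGroup.mk' M b := by
      rw [map_mul, map_mul, map_inv]; exact hc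
    rw [QuotientGroup.mk'_eq_mk'] at h2
    obtain ⟨m, hm, hmb⟩ := h2
    refine ⟨m⁻¹, inv_mem hm, isConj_iff.mpr ⟨c, ?_⟩⟩
    rw [← hmb, Subgroup.mem_center_iff.mp (hM hm) (c * a * c⁻¹)]
    group
  · rintro ⟨m, hm, h⟩
    have h2 := (QuotientGroup.mk' M).map_isConj h
    have h3 : QuotientGroup.mk' M m = 1 := by
      rw [← MonoidHom.mem_ker, QuotientGroup.ker_mk']; exact hm
    rwa [map_mul, h3, one_mul] at h2

private lemma s7_map_center (M : Subgroup G) [M.Normal] {Z : Subgroup G}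
    (hZ : Z ≤ Subgroup.center G) :
    Z.map (QuotientGroup.mk' M) ≤ Subgroup.center (G ⧸ M) := by
  rintro x' hx'
  obtain ⟨z, hz, rfl⟩ := hx'
  rw [Subgroup.mem_center_iff]
  intro y'
  obtain ⟨y, rfl⟩ := QuotientGroup.mk'_surjective M y'
  rw [← map_mul, ← map_mul, Subgroup.mem_center_iff.mp (hZ hz) y]

end Stmt7Aux

private lemma s7_L2 {G : Type*} [Group G] (Z : Subgroup G) (hZ : Z ≤ Subgroup.center G)
    (N : Subgroup ↥Z) (M : Subgroup G) [M.Normal] (hMZ : M ≤ Z)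
    (hMN : ∀ x : ↥Z, x ∈ N ↔ (x : G) ∈ M) :
    Nat.card (Quotient (zSetoid Z fun K => annZ Z K ≤ N)) =
      nIGZ (G ⧸ M) (Z.map (QuotientGroup.mk' M)) ⊥ := by
  classical
  have hMc : M ≤ Subgroup.center G := fun x hx => hZ (hMZ hx)
  have hZ'c : Z.map (QuotientGroup.mk' M) ≤ Subgroup.center (G ⧸ M) := s7_map_center M hZ
  -- annihilator correspondence
  have hann : ∀ g : G,
      annZ (Z.map (QuotientGroup.mk' M)) (ConjClasses.mk (QuotientGroup.mk' M g)) = ⊥ ↔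
        annZ Z (ConjClasses.mk g) ≤ N := by
    intro g
    constructor
    · intro h x hx
      have hX : IsConj ((x : G) * g) g := (s7_mem_annZ hZ x g).mp hx
      have hmem : QuotientGroup.mk' M (x : G) ∈ Z.map (QuotientGroup.mk' M) :=
        ⟨(x : G), x.2, rfl⟩
      have h2 : (⟨_, hmem⟩ : ↥(Z.map (QuotientGroup.mk' M))) ∈
          annZ (Z.map (QuotientGroup.mk' M)) (ConjClasses.mk (QuotientGroup.mk' M g)) := by
        rw [s7_mem_annZ hZ'c]
        show IsConj (QuotientGroup.mk' M (x : G) * QuotientGroup.mk' M g) (QuotientGroup.mk' M g)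
        rw [← map_mul]
        exact (QuotientGroup.mk' M).map_isConj hX
      rw [h, Subgroup.mem_bot] at h2
      have hx1 : QuotientGroup.mk' M (x : G) = 1 := Subtype.ext_iff.mp h2
      have hxM : (x : G) ∈ M := by
        rw [← QuotientGroup.ker_mk' M]
        exact MonoidHom.mem_ker.mpr hx1
      exact (hMN x).mpr hxM
    · intro h
      rw [eq_bot_iff]
      rintro w hw
      obtain ⟨z, hzZ, hzw⟩ := w.2
      have h2 : IsConj ((w : G ⧸ M) * QuotientGroup.mk' M g) (QuotientGroup.mk' M g) :=
        (s7_mem_annZ hZ'c w _).mp hw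
      rw [← hzw, ← map_mul, s7_isConj_quot M hMc] at h2
      obtain ⟨m, hmM, hconj⟩ := h2
      have hmc : ∀ x : G, x * m = m * x := fun x => Subgroup.mem_center_iff.mp (hMc hmM) x
      have h3 : IsConj (m⁻¹ * (z * g)) g := by
        have h4 := s7_conj_shift m hmc (m⁻¹ * (z * g)) g
        rw [show m * (m⁻¹ * (z * g)) = z * g by group] at h4
        exact h4.mp hconj
      have hmem : m⁻¹ * z ∈ Z := mul_mem (inv_mem (hMZ hmM)) hzZ
      have h5 : (⟨m⁻¹ * z, hmem⟩ : ↥Z) ∈ annZ Z (ConjClasses.mk g) := by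
        rw [s7_mem_annZ hZ]
        show IsConj ((m⁻¹ * z) * g) g
        rwa [mul_assoc]
      have h7 : m⁻¹ * z ∈ M := (hMN _).mp (h h5)
      have h8 : z ∈ M := by
        have h9 := mul_mem hmM h7
        rwa [show m * (m⁻¹ * z) = z by group] at h9
      have h9 : (w : G ⧸ M) = 1 := by
        rw [← hzw]
        exact (QuotientGroup.eq_one_iff z).mpr h8
      exact Subgroup.mem_bot.mpr (Subtype.ext h9)
  -- relation correspondence
  have hrel : ∀ a b : G,
      (∃ w ∈ Z.map (QuotientGroup.mk' M),
          IsConj (w * QuotientGroup.mk' M a) (QuotientGroup.mk' M b)) ↔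
        ∃ z ∈ Z, IsConj (z * a) b := by
    intro a b
    constructor
    · rintro ⟨w, hw, h⟩
      obtain ⟨z, hzZ, rfl⟩ := hw
      rw [← map_mul, s7_isConj_quot M hMc] at h
      obtain ⟨m, hmM, hconj⟩ := h
      have hmc : ∀ x : G, x * m = m * x := fun x => Subgroup.mem_center_iff.mp (hMc hmM) x
      refine ⟨m⁻¹ * z, mul_mem (inv_mem (hMZ hmM)) hzZ, ?_⟩
      have h4 := s7_conj_shift m hmc (m⁻¹ * (z * a)) b
      rw [show m * (m⁻¹ * (z * a)) = z * a by group] at h4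
      have h5 := h4.mp hconj
      rwa [← mul_assoc] at h5
    · rintro ⟨z, hzZ, h⟩
      refine ⟨QuotientGroup.mk' M z, ⟨z, hzZ, rfl⟩, ?_⟩
      rw [← map_mul]
      exact (QuotientGroup.mk' M).map_isConj h
  -- the bijection
  let f : {K : ConjClasses G // annZ Z K ≤ N} →
      {K' : ConjClasses (G ⧸ M) // annZ (Z.map (QuotientGroup.mk' M)) K' = ⊥} := fun K =>
    ⟨ConjClasses.map (QuotientGroup.mk' M) K.1, by
      obtain ⟨g, hg⟩ := K.1.exists_rep
      have hK := K.2
      rw [← hg] at hK ⊢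
      exact (hann g).mpr hK⟩
  have hf : ∀ K L, (zSetoid Z fun K => annZ Z K ≤ N).r K L →
      (zSetoid (Z.map (QuotientGroup.mk' M))
        fun K' => annZ (Z.map (QuotientGroup.mk' M)) K' = ⊥).r (f K) (f L) := by
    intro K L h
    obtain ⟨a, ha⟩ := K.1.exists_rep
    obtain ⟨b, hb⟩ := L.1.exists_rep
    rw [s7_rel_iff hZ K L a b ha.symm hb.symm] at h
    rw [s7_rel_iff hZ'c (f K) (f L) (QuotientGroup.mk' M a) (QuotientGroup.mk' M b)
      (by show ConjClasses.map (QuotientGroup.mk' M) K.1 = _; rw [← ha]; exact rfl)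
      (by show ConjClasses.map (QuotientGroup.mk' M) L.1 = _; rw [← hb]; exact rfl)]
    exact (hrel a b).mpr h
  let F : Quotient (zSetoid Z fun K => annZ Z K ≤ N) →
      Quotient (zSetoid (Z.map (QuotientGroup.mk' M))
        fun K' => annZ (Z.map (QuotientGroup.mk' M)) K' = ⊥) := Quotient.map' f hf
  have hFbij : Function.Bijective F := by
    constructor
    · intro q1 q2
      refine Quotient.inductionOn₂' q1 q2 ?_
      intro K L hq
      have hq' : Quotient.mk'' (f K) = Quotient.mk'' (f L) := hq
      have hr := Quotient.exact' hq'
      apply Quotient.sound'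
      obtain ⟨a, ha⟩ := K.1.exists_rep
      obtain ⟨b, hb⟩ := L.1.exists_rep
      rw [s7_rel_iff hZ'c (f K) (f L) (QuotientGroup.mk' M a) (QuotientGroup.mk' M b)
        (by show ConjClasses.map (QuotientGroup.mk' M) K.1 = _; rw [← ha]; exact rfl)
        (by show ConjClasses.map (QuotientGroup.mk' M) L.1 = _; rw [← hb]; exact rfl)] at hr
      rw [s7_rel_iff hZ K L a b ha.symm hb.symm]
      exact (hrel a b).mp hr
    · intro q
      refine Quotient.inductionOn' q ?_
      intro K'
      obtain ⟨x, hx⟩ := K'.1.exists_rep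
      obtain ⟨g, rfl⟩ := QuotientGroup.mk'_surjective M x
      have hP : annZ Z (ConjClasses.mk g) ≤ N := (hann g).mp (by rw [hx]; exact K'.2)
      refine ⟨Quotient.mk'' ⟨ConjClasses.mk g, hP⟩, ?_⟩
      have hfx : f ⟨ConjClasses.mk g, hP⟩ = K' := Subtype.ext hx
      show Quotient.mk'' (f ⟨ConjClasses.mk g, hP⟩) = Quotient.mk'' K'
      rw [hfx]
  exact Nat.card_eq_of_bijective F hFbij

private lemma s7_L1 {G : Type*} [Group G] [Finite G] (Z : Subgroup G)
    (hZ : Z ≤ Subgroup.center G) (N : Subgroup ↥Z) :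
    ∑ᶠ X ∈ {X : Subgroup ↥Z | X ≤ N}, nIGZ G Z X =
      Nat.card (Quotient (zSetoid Z fun K => annZ Z K ≤ N)) := by
  classical
  haveI : Finite (ConjClasses G) := Quotient.finite _
  haveI : Finite (Subgroup ↥Z) :=
    Finite.of_injective (fun X => (X : Set ↥Z)) SetLike.coe_injective
  letI : Fintype {X : Subgroup ↥Z // X ≤ N} := Fintype.ofFinite _
  letI : ∀ X : {X : Subgroup ↥Z // X ≤ N},
      Fintype (Quotient (zSetoid Z fun K => annZ Z K = X.1)) := fun X => Fintype.ofFinite _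
  let e : (Σ X : {X : Subgroup ↥Z // X ≤ N},
      Quotient (zSetoid Z fun K => annZ Z K = X.1)) →
      Quotient (zSetoid Z fun K => annZ Z K ≤ N) := fun p =>
    Quotient.map' (fun K => ⟨K.1, by rw [K.2]; exact p.1.2⟩) (fun K L h => h) p.2
  have key : ∀ (X Y : {X : Subgroup ↥Z // X ≤ N})
      (K : {K : ConjClasses G // annZ Z K = X.1}) (L : {K : ConjClasses G // annZ Z K = Y.1}),
      e ⟨X, Quotient.mk'' K⟩ = e ⟨Y, Quotient.mk'' L⟩ →
      (⟨X, Quotient.mk'' K⟩ : Σ X : {X : Subgroup ↥Z // X ≤ N},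
        Quotient (zSetoid Z fun K => annZ Z K = X.1)) = ⟨Y, Quotient.mk'' L⟩ := by
    intro X Y K L h
    have h' : Quotient.mk'' (s₁ := zSetoid Z fun K => annZ Z K ≤ N)
        (⟨K.1, by rw [K.2]; exact X.2⟩ : {K : ConjClasses G // annZ Z K ≤ N}) =
        Quotient.mk'' ⟨L.1, by rw [L.2]; exact Y.2⟩ := h
    have hrel := Quotient.exact' h'
    have hXY : X = Y := by
      apply Subtype.ext
      rw [← K.2, ← L.2]
      exact s7_ann_rel hZ _ _ hrel
    subst hXY
    exact congrArg (fun t => (⟨X, t⟩ : Σ X : {X : Subgroup ↥Z // X ≤ N},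
      Quotient (zSetoid Z fun K => annZ Z K = X.1))) (Quotient.sound' hrel)
  have he : Function.Bijective e := by
    constructor
    · rintro ⟨X, q⟩ ⟨Y, r⟩ h
      obtain ⟨K, rfl⟩ := q.exists_rep
      obtain ⟨L, rfl⟩ := r.exists_rep
      exact key X Y K L h
    · intro q
      obtain ⟨K, rfl⟩ := q.exists_rep
      exact ⟨⟨⟨annZ Z K.1, K.2⟩, Quotient.mk'' ⟨K.1, rfl⟩⟩, rfl⟩
  have hcard : Nat.card (Quotient (zSetoid Z fun K => annZ Z K ≤ N)) =
      ∑ X : {X : Subgroup ↥Z // X ≤ N}, nIGZ G Z X.1 := by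
    rw [← Nat.card_eq_of_bijective e he, Nat.card_eq_fintype_card, Fintype.card_sigma]
    exact Finset.sum_congr rfl fun X _ => (Nat.card_eq_fintype_card).symm
  rw [hcard]
  have hsfin : ({X : Subgroup ↥Z | X ≤ N}).Finite := Set.toFinite _
  rw [finsum_mem_eq_finite_toFinset_sum _ hsfin]
  exact Finset.sum_subtype hsfin.toFinset (fun X => by simp) (fun X => nIGZ G Z X)

/-- `∑_{X ≤ N} |I(G:Z)_X| = |I(G/N : Z/N)_{1}|`. -/
theorem stmt7 (G : Type*) [Group G] [Finite G] (Z : Subgroup G)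
    (hZ : Z ≤ Subgroup.center G) (N : Subgroup ↥Z)
    [hN : (N.map Z.subtype).Normal] :
    ∑ᶠ X ∈ {X : Subgroup ↥Z | X ≤ N}, nIGZ G Z X =
      nIGZ (G ⧸ N.map Z.subtype)
        (Z.map (QuotientGroup.mk' (N.map Z.subtype))) ⊥ := by
  rw [s7_L1 Z hZ N]
  refine s7_L2 Z hZ N (N.map Z.subtype) (Subgroup.map_subtype_le N) ?_
  intro x
  constructor
  · intro h
    exact ⟨x, h, rfl⟩
  · rintro ⟨n, hn, hnx⟩
    exact (Subtype.ext hnx) ▸ hn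
end

section
/- Let G be a finite group, Z ≤ Z(G), and φ ∈ Irr(Z). The set B(G)_φ = {e_φ[K_j] : X ≤ ker φ, j ∈ I(G:Z)_X} is a basis of e_φ·Z(ℂG), and dim e_φ·Z(ℂG) = |I(G/ker φ : Z/ker φ)_{1}|. -/
open scoped Pointwise BigOperators

set_option synthInstance.maxHeartbeats 1000000
set_option maxHeartbeats 1000000

noncomputable section Aux

open MonoidAlgebra Finsupp

set_option linter.unusedSectionVars false
open scoped Classical
namespace Harada

variable {G : Type*} [Group G] [Finite G]

/-- sum of `single g 1` over a set. -/
def mySum (S : Set G) : MonoidAlgebra ℂ G :=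
  ∑ g ∈ (Set.toFinite S).toFinset, MonoidAlgebra.single g (1 : ℂ)

lemma classSum_eq (K : ConjClasses G) : classSum K = mySum K.carrier := by
  rw [classSum, mySum, ← finsum_mem_coe_finset, Set.Finite.coe_toFinset]

lemma mySum_apply_of_mem {S : Set G} {g : G} (h : g ∈ S) : (mySum S).coeff g = 1 := by
  classical
  rw [mySum, MonoidAlgebra.coeff_sum, Finset.sum_apply']
  rw [Finset.sum_eq_single g (fun b _ hb => by
    simp [MonoidAlgebra.coeff_single, Finsupp.single_apply, hb]) (fun hg => by
    simp [Set.Finite.mem_toFinset, h] at hg)]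
  simp [MonoidAlgebra.coeff_single]

lemma mySum_apply_of_not_mem {S : Set G} {g : G} (h : g ∉ S) : (mySum S).coeff g = 0 := by
  classical
  rw [mySum, MonoidAlgebra.coeff_sum, Finset.sum_apply']
  refine Finset.sum_eq_zero fun b hb => ?_
  rw [Set.Finite.mem_toFinset] at hb
  have : b ≠ g := fun e => h (e ▸ hb)
  simp [MonoidAlgebra.coeff_single, Finsupp.single_apply, this]

lemma mySum_apply (S : Set G) (g : G) [Decidable (g ∈ S)] :
    (mySum S).coeff g = if g ∈ S then 1 else 0 := by
  split
  · exact mySum_apply_of_mem ‹_›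
  · exact mySum_apply_of_not_mem ‹_›

lemma single_mul_mySum (z : G) (S : Set G) :
    MonoidAlgebra.single z (1 : ℂ) * mySum S = mySum (z • S) := by
  classical
  ext g
  classical
  rw [MonoidAlgebra.single_mul_apply, one_mul, mySum_apply, mySum_apply]
  congr 1
  simp only [eq_iff_iff]
  constructor
  · intro h; exact ⟨_, h, by show z • _ = _; rw [smul_eq_mul, mul_inv_cancel_left]⟩
  · rintro ⟨y, hy, rfl⟩; simpa using hy

lemma mySum_mul_apply (S : Set G) (f : MonoidAlgebra ℂ G) (y : G) :
    (mySum S * f).coeff y = ∑ a ∈ (Set.toFinite S).toFinset, f.coeff (a⁻¹ * y) := by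
  rw [mySum, Finset.sum_mul, MonoidAlgebra.coeff_sum, Finset.sum_apply']
  refine Finset.sum_congr rfl fun a _ => ?_
  rw [MonoidAlgebra.single_mul_apply, one_mul]

lemma mul_mySum_apply (S : Set G) (f : MonoidAlgebra ℂ G) (y : G) :
    (f * mySum S).coeff y = ∑ a ∈ (Set.toFinite S).toFinset, f.coeff (y * a⁻¹) := by
  rw [mySum, Finset.mul_sum, MonoidAlgebra.coeff_sum, Finset.sum_apply']
  refine Finset.sum_congr rfl fun a _ => ?_
  rw [MonoidAlgebra.mul_single_apply, mul_one]


lemma mk_out (K : ConjClasses G) : ConjClasses.mk (Quotient.out K) = K :=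
  Quotient.out_eq K

lemma out_mem_carrier (K : ConjClasses G) : Quotient.out K ∈ K.carrier :=
  ConjClasses.mem_carrier_iff_mk_eq.2 (mk_out K)

lemma eq_of_mem_carrier {K L : ConjClasses G} {x : G}
    (hK : x ∈ K.carrier) (hL : x ∈ L.carrier) : K = L := by
  rw [← ConjClasses.mem_carrier_iff_mk_eq.1 hK, ConjClasses.mem_carrier_iff_mk_eq.1 hL]

lemma conj_mem_carrier {K : ConjClasses G} {a : G} (h : a ∈ K.carrier) (y : G) :
    y * a * y⁻¹ ∈ K.carrier := by
  rw [ConjClasses.mem_carrier_iff_mk_eq] at h ⊢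
  rw [← h]
  exact ConjClasses.mk_eq_mk_iff_isConj.2 (isConj_iff.2 ⟨y, rfl⟩).symm

lemma smul_carrier {z : G} (hz : z ∈ Subgroup.center G) (a : G) :
    z • (ConjClasses.mk a).carrier = (ConjClasses.mk (z * a)).carrier := by
  have hz' := Subgroup.mem_center_iff.1 hz
  have hzi := Subgroup.mem_center_iff.1 (inv_mem hz)
  ext x
  rw [Set.mem_smul_set_iff_inv_smul_mem, ConjClasses.mem_carrier_iff_mk_eq,
    ConjClasses.mem_carrier_iff_mk_eq, ConjClasses.mk_eq_mk_iff_isConj,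
    ConjClasses.mk_eq_mk_iff_isConj, isConj_iff, isConj_iff]
  constructor
  · rintro ⟨c, rfl⟩
    refine ⟨c, ?_⟩
    show c * x * c⁻¹ = z * (c * (z⁻¹ • x) * c⁻¹)
    simp only [smul_eq_mul, ← mul_assoc]
    rw [← hz' c, mul_inv_cancel_right]
  · rintro ⟨c, hc⟩
    refine ⟨c, ?_⟩
    have ha : a = z⁻¹ * (c * x * c⁻¹) := by rw [hc, inv_mul_cancel_left]
    rw [ha]
    simp only [smul_eq_mul, ← mul_assoc]
    rw [hzi c]

lemma exists_smul_carrier {z : G} (hz : z ∈ Subgroup.center G) (K : ConjClasses G) :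
    ∃ L : ConjClasses G, z • K.carrier = L.carrier :=
  ⟨ConjClasses.mk (z * Quotient.out K), by rw [← mk_out K, smul_carrier hz, mk_out]⟩

lemma classSum_mem_center (K : ConjClasses G) :
    classSum K ∈ Subalgebra.center ℂ (MonoidAlgebra ℂ G) := by
  classical
  rw [Subalgebra.mem_center_iff]
  intro f
  rw [classSum_eq]
  ext y
  rw [mySum_mul_apply, mul_mySum_apply]
  refine Finset.sum_nbij' (fun a => y * a * y⁻¹) (fun a => y⁻¹ * a * y) ?_ ?_ ?_ ?_ ?_
  · intro a ha
    rw [Set.Finite.mem_toFinset] at ha ⊢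
    exact conj_mem_carrier ha y
  · intro a ha
    rw [Set.Finite.mem_toFinset] at ha ⊢
    simpa using conj_mem_carrier ha y⁻¹
  · intro a _; group
  · intro a _; group
  · intro a _
    congr 1
    group

lemma single_center_mem_center {z : G} (hz : z ∈ Subgroup.center G) (c : ℂ) :
    MonoidAlgebra.single z c ∈ Subalgebra.center ℂ (MonoidAlgebra ℂ G) := by
  have hzi := Subgroup.mem_center_iff.1 (inv_mem hz)
  rw [Subalgebra.mem_center_iff]
  intro f
  ext y
  rw [MonoidAlgebra.mul_single_apply, MonoidAlgebra.single_mul_apply, mul_comm c]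
  congr 2
  exact hzi y

lemma ephi_mem_center (Z : Subgroup G) (hZ : Z ≤ Subgroup.center G) (φ : ↥Z →* ℂˣ) :
    ephi Z φ ∈ Subalgebra.center ℂ (MonoidAlgebra ℂ G) := by
  letI : Fintype ↥Z := Fintype.ofFinite _
  rw [ephi, finsum_eq_sum_of_fintype]
  refine Subalgebra.smul_mem _ (Subalgebra.sum_mem _ fun z _ => ?_) _
  exact single_center_mem_center (hZ z.2) _


lemma mem_annZ {Z : Subgroup G} {K : ConjClasses G} {z : ↥Z} :
    z ∈ annZ Z K ↔ (z : G) • K.carrier = K.carrier := by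
  rw [annZ, Subgroup.mem_comap, MulAction.mem_stabilizer_iff]; rfl

variable (Z : Subgroup G) (φ : ↥Z →* ℂˣ)

lemma ephi_mul_apply (K : ConjClasses G) (g : G) :
    letI : Fintype ↥Z := Fintype.ofFinite _
    (ephi Z φ * classSum K).coeff g
      = (Nat.card ↥Z : ℂ)⁻¹ *
        ∑ z : ↥Z, (if (z : G)⁻¹ * g ∈ K.carrier then ((starRingEnd ℂ) (φ z : ℂ)) else 0) := by
  classical
  letI : Fintype ↥Z := Fintype.ofFinite _
  rw [ephi, finsum_eq_sum_of_fintype, classSum_eq, smul_mul_assoc, MonoidAlgebra.coeff_smul_apply,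
    Finset.sum_mul, MonoidAlgebra.coeff_sum, Finset.sum_apply']
  rw [smul_eq_mul]
  congr 1
  refine Finset.sum_congr rfl fun z _ => ?_
  rw [MonoidAlgebra.single_mul_apply, mySum_apply, mul_ite, mul_one, mul_zero]

lemma inv_smul_mem_iff (hZ : Z ≤ Subgroup.center G) {K : ConjClasses G} {x : G}
    (hx : x ∈ K.carrier) (z : ↥Z) :
    (z : G)⁻¹ * x ∈ K.carrier ↔ z ∈ annZ Z K := by
  rw [mem_annZ]
  constructor
  · intro h
    obtain ⟨L, hL⟩ := exists_smul_carrier (hZ z.2) K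
    have hxL : x ∈ L.carrier := by
      rw [← hL]
      exact ⟨_, h, by show (z:G) • _ = _; rw [smul_eq_mul, mul_inv_cancel_left]⟩
    rw [hL, eq_of_mem_carrier hxL hx]
  · intro h
    have hmem : x ∈ (z : G) • K.carrier := h.symm ▸ hx
    obtain ⟨y, hy, hxy⟩ := hmem
    have hy2 : (z:G)⁻¹ * x = y := by
      rw [← hxy]
      simp only [smul_eq_mul, inv_mul_cancel_left]
    rwa [hy2]

lemma charSum_of_le {A : Subgroup ↥Z} (h : A ≤ φ.ker) :
    letI : Fintype ↥Z := Fintype.ofFinite _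
    ∑ z : ↥Z, (if z ∈ A then ((starRingEnd ℂ) (φ z : ℂ)) else 0) = (Nat.card ↥A : ℂ) := by
  classical
  letI : Fintype ↥Z := Fintype.ofFinite _
  rw [Finset.sum_ite, Finset.sum_const_zero, add_zero]
  have h1 : ∀ z ∈ Finset.univ.filter (fun z : ↥Z => z ∈ A),
      (starRingEnd ℂ) (φ z : ℂ) = 1 := by
    intro z hz
    rw [Finset.mem_filter] at hz
    have : φ z = 1 := h hz.2
    rw [this, Units.val_one, map_one]
  rw [Finset.sum_congr rfl h1, Finset.sum_const, nsmul_eq_mul, mul_one]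
  congr 1
  rw [Nat.card_eq_fintype_card, Fintype.card_subtype]

lemma charSum_of_not_le {A : Subgroup ↥Z} (h : ¬ A ≤ φ.ker) :
    letI : Fintype ↥Z := Fintype.ofFinite _
    ∑ z : ↥Z, (if z ∈ A then ((starRingEnd ℂ) (φ z : ℂ)) else 0) = 0 := by
  classical
  letI : Fintype ↥Z := Fintype.ofFinite _
  obtain ⟨a, haA, hak⟩ := SetLike.not_le_iff_exists.1 h
  set S := ∑ z : ↥Z, (if z ∈ A then ((starRingEnd ℂ) (φ z : ℂ)) else 0) with hS
  have key : (starRingEnd ℂ) (φ a : ℂ) * S = S := by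
    rw [hS, Finset.mul_sum]
    refine Fintype.sum_equiv (Equiv.mulLeft a) _ _ fun z => ?_
    change _ = if a * z ∈ A then (starRingEnd ℂ) (φ (a * z) : ℂ) else 0
    by_cases hzA : z ∈ A
    · rw [if_pos hzA, if_pos (mul_mem haA hzA)]
      rw [← map_mul, ← Units.val_mul, ← map_mul]
    · rw [if_neg hzA, if_neg (fun c => hzA ((mul_mem_cancel_left haA).1 c)), mul_zero]
  have h1 : (starRingEnd ℂ) (φ a : ℂ) ≠ 1 := by
    intro e
    apply hak
    have e2 : (φ a : ℂ) = 1 := by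
      have := congrArg (starRingEnd ℂ) e
      simpa using this
    have : φ a = 1 := Units.ext (by simpa using e2)
    exact this
  have h2 : (1 - (starRingEnd ℂ) (φ a : ℂ)) * S = 0 := by
    rw [sub_mul, one_mul, key, sub_self]
  rcases mul_eq_zero.1 h2 with h3 | h3
  · exact absurd (by linear_combination -h3 : (starRingEnd ℂ) (φ a : ℂ) = 1) h1
  · exact h3

lemma ephi_mul_classSum_apply_mem (hZ : Z ≤ Subgroup.center G) {K : ConjClasses G} {g : G}
    (hg : g ∈ K.carrier) :
    letI : Fintype ↥Z := Fintype.ofFinite _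
    (ephi Z φ * classSum K).coeff g
      = (Nat.card ↥Z : ℂ)⁻¹ *
        ∑ z : ↥Z, (if z ∈ annZ Z K then ((starRingEnd ℂ) (φ z : ℂ)) else 0) := by
  letI : Fintype ↥Z := Fintype.ofFinite _
  rw [ephi_mul_apply]
  congr 1
  exact Finset.sum_congr rfl fun z _ => if_congr (inv_smul_mem_iff Z hZ hg z) rfl rfl

lemma ephi_mul_classSum_apply_of_le (hZ : Z ≤ Subgroup.center G) {K : ConjClasses G}
    (hK : annZ Z K ≤ φ.ker) {g : G} (hg : g ∈ K.carrier) :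
    (ephi Z φ * classSum K).coeff g
      = (Nat.card ↥Z : ℂ)⁻¹ * (Nat.card ↥(annZ Z K) : ℂ) := by
  rw [ephi_mul_classSum_apply_mem Z φ hZ hg, charSum_of_le Z φ hK]

lemma coeff_ne_zero (K : ConjClasses G) :
    (Nat.card ↥Z : ℂ)⁻¹ * (Nat.card ↥(annZ Z K) : ℂ) ≠ 0 := by
  have h1 : (Nat.card ↥Z : ℂ) ≠ 0 := Nat.cast_ne_zero.2 Nat.card_pos.ne'
  have h2 : (Nat.card ↥(annZ Z K) : ℂ) ≠ 0 := Nat.cast_ne_zero.2 Nat.card_pos.ne'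
  exact mul_ne_zero (inv_ne_zero h1) h2

lemma ephi_mul_classSum_eq_zero (hZ : Z ≤ Subgroup.center G) {K : ConjClasses G}
    (hK : ¬ annZ Z K ≤ φ.ker) : ephi Z φ * classSum K = 0 := by
  classical
  letI : Fintype ↥Z := Fintype.ofFinite _
  ext g
  rw [ephi_mul_apply]
  by_cases hex : ∃ z : ↥Z, (z : G)⁻¹ * g ∈ K.carrier
  · obtain ⟨z₀, hz₀⟩ := hex
    have hsum : ∑ z : ↥Z, (if (z : G)⁻¹ * g ∈ K.carrier then ((starRingEnd ℂ) (φ z : ℂ)) else 0)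
        = (starRingEnd ℂ) (φ z₀ : ℂ) *
          ∑ z : ↥Z, (if z ∈ annZ Z K then ((starRingEnd ℂ) (φ z : ℂ)) else 0) := by
      rw [Finset.mul_sum]
      refine Fintype.sum_equiv (Equiv.mulLeft z₀⁻¹) _ _ fun z => ?_
      change _ = (starRingEnd ℂ) (φ z₀ : ℂ) *
        if z₀⁻¹ * z ∈ annZ Z K then (starRingEnd ℂ) (φ (z₀⁻¹ * z) : ℂ) else 0
      have harg : ((z : ↥Z) : G)⁻¹ * g = (((z₀⁻¹ * z : ↥Z) : G))⁻¹ * (((z₀ : ↥Z) : G)⁻¹ * g) := by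
        push_cast
        group
      have hv : (starRingEnd ℂ) (φ z : ℂ)
          = (starRingEnd ℂ) (φ z₀ : ℂ) * (starRingEnd ℂ) (φ (z₀⁻¹ * z) : ℂ) := by
        rw [← map_mul, ← Units.val_mul, ← map_mul, mul_inv_cancel_left]
      by_cases hz : (z₀⁻¹ * z : ↥Z) ∈ annZ Z K
      · rw [if_pos (by rw [harg, inv_smul_mem_iff Z hZ hz₀]; exact hz), if_pos hz, hv]
      · rw [if_neg (by rw [harg, inv_smul_mem_iff Z hZ hz₀]; exact hz), if_neg hz, mul_zero]
    rw [hsum, charSum_of_not_le Z φ hK, mul_zero, mul_zero]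
    simp
  · push_neg at hex
    rw [Finset.sum_congr rfl fun z _ => if_neg (hex z), Finset.sum_const_zero, mul_zero]
    simp

lemma classSum_smul_eq {z : G} {K L : ConjClasses G} (h : z • K.carrier = L.carrier) :
    classSum L = MonoidAlgebra.single z (1 : ℂ) * classSum K := by
  rw [classSum_eq, classSum_eq, single_mul_mySum, h]

lemma ephi_mul_single (z : ↥Z) :
    ephi Z φ * MonoidAlgebra.single (z : G) (1 : ℂ)
      = ((starRingEnd ℂ) (((φ z)⁻¹ : ℂˣ) : ℂ)) • ephi Z φ := by
  letI : Fintype ↥Z := Fintype.ofFinite _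
  have hkey : (∑ w : ↥Z, MonoidAlgebra.single ((w : ↥Z) : G) ((starRingEnd ℂ) (φ w : ℂ)))
        * MonoidAlgebra.single (z : G) (1 : ℂ)
      = ((starRingEnd ℂ) (((φ z)⁻¹ : ℂˣ) : ℂ)) •
        ∑ w : ↥Z, MonoidAlgebra.single ((w : ↥Z) : G) ((starRingEnd ℂ) (φ w : ℂ)) := by
    rw [Finset.sum_mul, Finset.smul_sum]
    refine Fintype.sum_equiv (Equiv.mulRight z) _ _ fun w => ?_
    simp only [Equiv.coe_mulRight]
    rw [MonoidAlgebra.single_mul_single, mul_one, MonoidAlgebra.smul_single]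
    have hval : ((φ z)⁻¹ : ℂˣ) * φ (w * z) = φ w := by
      rw [map_mul, mul_comm (φ w), ← mul_assoc, inv_mul_cancel, one_mul]
    have : ((starRingEnd ℂ) (((φ z)⁻¹ : ℂˣ) : ℂ)) • ((starRingEnd ℂ) (φ (w * z) : ℂ))
        = (starRingEnd ℂ) (φ w : ℂ) := by
      rw [smul_eq_mul, ← map_mul, ← Units.val_mul, hval]
    rw [this]
    rfl
  rw [ephi, finsum_eq_sum_of_fintype, smul_mul_assoc, hkey, smul_comm]

lemma center_eq_sum_classSum {y : MonoidAlgebra ℂ G}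
    (hy : y ∈ Subalgebra.center ℂ (MonoidAlgebra ℂ G)) :
    letI : Fintype (ConjClasses G) := Fintype.ofFinite _
    y = ∑ K : ConjClasses G, y.coeff (Quotient.out K) • classSum K := by
  letI : Fintype (ConjClasses G) := Fintype.ofFinite _
  have hclass : ∀ (g x : G), y.coeff (g * x * g⁻¹) = y.coeff x := by
    intro g x
    have hb := Subalgebra.mem_center_iff.1 hy (MonoidAlgebra.single g (1 : ℂ))
    have ht : (MonoidAlgebra.single g (1:ℂ) * y).coeff (g * x) = (y * MonoidAlgebra.single g (1:ℂ)).coeff (g * x) := by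
      rw [hb]
    rw [MonoidAlgebra.single_mul_apply, MonoidAlgebra.mul_single_apply, one_mul, mul_one,
      inv_mul_cancel_left] at ht
    exact ht.symm
  have hxy : ∀ x : G, y.coeff x = y.coeff (Quotient.out (ConjClasses.mk x)) := by
    intro x
    have h1 : ConjClasses.mk (Quotient.out (ConjClasses.mk x)) = ConjClasses.mk x := mk_out _
    obtain ⟨g, hg⟩ := isConj_iff.1 (ConjClasses.mk_eq_mk_iff_isConj.1 h1)
    conv_lhs => rw [← hg]
    rw [hclass]
  ext x
  rw [MonoidAlgebra.coeff_sum, Finset.sum_apply']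
  have hone : ∀ K ∈ Finset.univ, K ≠ ConjClasses.mk x →
      (y.coeff (Quotient.out K) • classSum K).coeff x = 0 := by
    intro K _ hK
    rw [MonoidAlgebra.coeff_smul_apply, classSum_eq,
      mySum_apply_of_not_mem (fun hm => hK (ConjClasses.mem_carrier_iff_mk_eq.1 hm).symm),
      smul_zero]
  rw [Finset.sum_eq_single (ConjClasses.mk x) hone (fun h => absurd (Finset.mem_univ _) h),
    MonoidAlgebra.coeff_smul_apply, classSum_eq, mySum_apply_of_mem ConjClasses.mem_carrier_mk,
    smul_eq_mul, mul_one]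
  exact hxy x

lemma repClass_spec (o : RepIdx G Z φ) : annZ Z (repClass o) ≤ φ.ker :=
  (Quotient.out o).2

lemma apply_eq_zero_of_no_trans {K : ConjClasses G} {g : G}
    (h : ∀ z : ↥Z, (z : G)⁻¹ * g ∉ K.carrier) : (ephi Z φ * classSum K).coeff g = 0 := by
  letI : Fintype ↥Z := Fintype.ofFinite _
  rw [ephi_mul_apply]
  rw [Finset.sum_congr rfl fun z _ => if_neg (h z), Finset.sum_const_zero, mul_zero]

lemma no_trans_of_not_rel (hZ : Z ≤ Subgroup.center G) {K L : ConjClasses G}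
    (hKL : ¬ ∃ z ∈ Z, z • K.carrier = L.carrier) {g : G} (hg : g ∈ L.carrier)
    (z : ↥Z) : (z : G)⁻¹ * g ∉ K.carrier := by
  intro hmem
  obtain ⟨M, hM⟩ := exists_smul_carrier (hZ z.2) K
  have hgM : g ∈ M.carrier := by
    rw [← hM]
    exact ⟨_, hmem, by simp only [smul_eq_mul, mul_inv_cancel_left]⟩
  exact hKL ⟨(z : G), z.2, by rw [hM, eq_of_mem_carrier hgM hg]⟩

lemma li (hZ : Z ≤ Subgroup.center G) :
    LinearIndependent ℂ (fun o : RepIdx G Z φ => ephi Z φ * classSum (repClass o)) := by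
  rw [linearIndependent_iff']
  intro s c hsum o ho
  set g : G := Quotient.out (repClass o) with hg
  have hgo : g ∈ (repClass o).carrier := out_mem_carrier _
  have h0 : (∑ i ∈ s, c i • (ephi Z φ * classSum (repClass i))).coeff g
      = (0 : MonoidAlgebra ℂ G).coeff g := by rw [hsum]
  rw [MonoidAlgebra.coeff_zero, Finsupp.zero_apply, MonoidAlgebra.coeff_sum, Finset.sum_apply'] at h0
  have hvanish : ∀ i ∈ s, i ≠ o → (c i • (ephi Z φ * classSum (repClass i))).coeff g = 0 := by
    intro i _ hio
    have hKL : ¬ ∃ z ∈ Z, z • (repClass i).carrier = (repClass o).carrier := by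
      intro hrel
      exact hio (Quotient.out_equiv_out.1 hrel)
    rw [MonoidAlgebra.coeff_smul_apply, apply_eq_zero_of_no_trans Z φ
      (fun z => no_trans_of_not_rel Z hZ hKL hgo z), smul_zero]
  rw [Finset.sum_eq_single_of_mem o ho hvanish, MonoidAlgebra.coeff_smul_apply, smul_eq_mul,
    ephi_mul_classSum_apply_of_le Z φ hZ (repClass_spec Z φ o) hgo] at h0
  exact (mul_eq_zero.1 h0).resolve_right (coeff_ne_zero Z (repClass o))

lemma span_eq (hZ : Z ≤ Subgroup.center G) :
    Submodule.span ℂ (Set.range fun o : RepIdx G Z φ => ephi Z φ * classSum (repClass o))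
      = Submodule.map (LinearMap.mulLeft ℂ (ephi Z φ))
          (Subalgebra.center ℂ (MonoidAlgebra ℂ G)).toSubmodule := by
  letI : Fintype (ConjClasses G) := Fintype.ofFinite _
  apply le_antisymm
  · rw [Submodule.span_le]
    rintro _ ⟨o, rfl⟩
    exact Submodule.mem_map.2 ⟨classSum (repClass o),
      (Subalgebra.mem_toSubmodule _).2 (classSum_mem_center _), rfl⟩
  · rintro x hx
    obtain ⟨y, hy, rfl⟩ := Submodule.mem_map.1 hx
    show ephi Z φ * y ∈ _
    rw [center_eq_sum_classSum ((Subalgebra.mem_toSubmodule _).1 hy), Finset.mul_sum]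
    refine Submodule.sum_mem _ fun K _ => ?_
    rw [mul_smul_comm]
    refine Submodule.smul_mem _ _ ?_
    by_cases hK : annZ Z K ≤ φ.ker
    · set o : RepIdx G Z φ := Quotient.mk (zSetoid Z fun K => annZ Z K ≤ φ.ker) ⟨K, hK⟩
        with ho
      have hrel := @Quotient.mk_out _ (zSetoid Z fun K => annZ Z K ≤ φ.ker) ⟨K, hK⟩
      obtain ⟨z, hzZ, hz⟩ := hrel
      rw [classSum_smul_eq hz, ← mul_assoc, ephi_mul_single Z φ ⟨z, hzZ⟩, smul_mul_assoc]
      exact Submodule.smul_mem _ _ (Submodule.subset_span ⟨o, rfl⟩)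
    · rw [ephi_mul_classSum_eq_zero Z φ hZ hK]
      exact Submodule.zero_mem _

section Quot

variable (N : Subgroup G) [hN : N.Normal]

lemma carrier_map (K : ConjClasses G) :
    (ConjClasses.map (QuotientGroup.mk' N) K).carrier
      = (QuotientGroup.mk' N) '' K.carrier := by
  obtain ⟨a, rfl⟩ := ConjClasses.exists_rep K
  have hma : ConjClasses.map (QuotientGroup.mk' N) (ConjClasses.mk a)
      = ConjClasses.mk ((QuotientGroup.mk' N) a) := rfl
  rw [hma]
  ext xb
  constructor
  · intro hx
    have h1 : IsConj ((QuotientGroup.mk' N) a) xb :=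
      (ConjClasses.mk_eq_mk_iff_isConj.1 (ConjClasses.mem_carrier_iff_mk_eq.1 hx)).symm
    obtain ⟨cb, hcb⟩ := isConj_iff.1 h1
    obtain ⟨c, rfl⟩ := QuotientGroup.mk'_surjective N cb
    refine ⟨c * a * c⁻¹, conj_mem_carrier ConjClasses.mem_carrier_mk c, ?_⟩
    rw [map_mul, map_mul, map_inv]
    exact hcb
  · rintro ⟨x, hxK, rfl⟩
    rw [ConjClasses.mem_carrier_iff_mk_eq] at hxK ⊢
    exact ConjClasses.mk_eq_mk_iff_isConj.2 ((QuotientGroup.mk' N).map_isConj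
      (ConjClasses.mk_eq_mk_iff_isConj.1 hxK))

lemma smul_image (z : G) (S : Set G) :
    ((QuotientGroup.mk' N) z) • ((QuotientGroup.mk' N) '' S)
      = (QuotientGroup.mk' N) '' (z • S) := by
  ext t
  constructor
  · rintro ⟨u, ⟨s, hs, rfl⟩, rfl⟩
    exact ⟨z * s, ⟨s, hs, rfl⟩, by simp only [smul_eq_mul, map_mul]⟩
  · rintro ⟨u, ⟨s, hs, rfl⟩, rfl⟩
    exact ⟨(QuotientGroup.mk' N) s, ⟨s, hs, rfl⟩, by simp only [smul_eq_mul, map_mul]⟩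

lemma image_eq_iff (hNc : N ≤ Subgroup.center G) {K L : ConjClasses G} :
    (QuotientGroup.mk' N) '' K.carrier = (QuotientGroup.mk' N) '' L.carrier
      ↔ ∃ n ∈ N, n • K.carrier = L.carrier := by
  constructor
  · intro h
    have hgL : Quotient.out L ∈ L.carrier := out_mem_carrier L
    have hmem : (QuotientGroup.mk' N) (Quotient.out L) ∈ (QuotientGroup.mk' N) '' K.carrier :=
      h ▸ ⟨Quotient.out L, hgL, rfl⟩
    obtain ⟨c, hcK, hc⟩ := hmem
    set n : G := Quotient.out L * c⁻¹ with hn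
    have hnN : n ∈ N := by
      rw [← QuotientGroup.eq_one_iff n]
      show ((QuotientGroup.mk' N) n : G ⧸ N) = 1
      rw [hn, map_mul, map_inv, hc, mul_inv_cancel]
    refine ⟨n, hnN, ?_⟩
    obtain ⟨M, hM⟩ := exists_smul_carrier (hNc hnN) K
    have houtM : Quotient.out L ∈ M.carrier := by
      rw [← hM]
      refine ⟨c, hcK, ?_⟩
      show n • c = _
      rw [smul_eq_mul, hn, inv_mul_cancel_right]
    rw [hM, eq_of_mem_carrier houtM hgL]
  · rintro ⟨n, hn, h⟩
    rw [← h, ← smul_image]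
    have h1 : ((QuotientGroup.mk' N) n : G ⧸ N) = 1 := (QuotientGroup.eq_one_iff n).2 hn
    rw [h1, one_smul]

lemma mem_ker_of_coe_mem {a : ↥Z} (h : (a : G) ∈ (φ.ker).map Z.subtype) : a ∈ φ.ker := by
  obtain ⟨m, hm, hma⟩ := h
  have : m = a := Subtype.ext hma
  exact this ▸ hm

lemma ann_bot (hZ : Z ≤ Subgroup.center G) (hNZ : N ≤ Z)
    (hker : ∀ a : ↥Z, (a : G) ∈ N ↔ a ∈ φ.ker)
    {K : ConjClasses G} (hK : annZ Z K ≤ φ.ker) :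
    annZ (Z.map (QuotientGroup.mk' N)) (ConjClasses.map (QuotientGroup.mk' N) K) = ⊥ := by
  rw [Subgroup.eq_bot_iff_forall]
  intro zb hzb
  rw [mem_annZ, carrier_map] at hzb
  obtain ⟨z, hzZ, hzeq⟩ := zb.2
  rw [← hzeq, smul_image] at hzb
  obtain ⟨M, hM⟩ := exists_smul_carrier (hZ hzZ) K
  rw [hM] at hzb
  obtain ⟨n, hnN, hnM⟩ := (image_eq_iff N (le_trans hNZ hZ)).1 hzb
  have hstab : (n * z) • K.carrier = K.carrier := by
    rw [mul_smul, hM, hnM]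
  have hmem : (⟨n, hNZ hnN⟩ * ⟨z, hzZ⟩ : ↥Z) ∈ annZ Z K := by
    rw [mem_annZ]
    exact hstab
  have hker1 : (⟨n, hNZ hnN⟩ * ⟨z, hzZ⟩ : ↥Z) ∈ φ.ker := hK hmem
  have hker2 : (⟨n, hNZ hnN⟩ : ↥Z) ∈ φ.ker := (hker _).1 hnN
  have hzker : (⟨z, hzZ⟩ : ↥Z) ∈ φ.ker := by
    have := mul_mem (inv_mem hker2) hker1
    rwa [inv_mul_cancel_left] at this
  have hzN : z ∈ N := (hker ⟨z, hzZ⟩).2 hzker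
  have hz1 : ((QuotientGroup.mk' N) z : G ⧸ N) = 1 := (QuotientGroup.eq_one_iff z).2 hzN
  exact Subtype.ext (by rw [← hzeq, hz1]; rfl)

lemma ann_le (hZ : Z ≤ Subgroup.center G) (hNZ : N ≤ Z)
    (hker : ∀ a : ↥Z, (a : G) ∈ N ↔ a ∈ φ.ker) {K : ConjClasses G}
    (h : annZ (Z.map (QuotientGroup.mk' N)) (ConjClasses.map (QuotientGroup.mk' N) K) = ⊥) :
    annZ Z K ≤ φ.ker := by
  intro a ha
  rw [mem_annZ] at ha
  have hmemZb : (QuotientGroup.mk' N) (a : G) ∈ Z.map (QuotientGroup.mk' N) :=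
    ⟨(a : G), a.2, rfl⟩
  have hstab : (⟨(QuotientGroup.mk' N) (a : G), hmemZb⟩ : ↥(Z.map (QuotientGroup.mk' N)))
      ∈ annZ (Z.map (QuotientGroup.mk' N)) (ConjClasses.map (QuotientGroup.mk' N) K) := by
    rw [mem_annZ, carrier_map]
    show ((QuotientGroup.mk' N) (a : G)) • _ = _
    rw [smul_image, ha]
  rw [h, Subgroup.mem_bot] at hstab
  have h1 : ((QuotientGroup.mk' N) (a : G) : G ⧸ N) = 1 := by
    have := congrArg Subtype.val hstab
    simpa using this
  exact (hker a).1 ((QuotientGroup.eq_one_iff _).1 h1)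

lemma card_eq (hZ : Z ≤ Subgroup.center G) (hNZ : N ≤ Z)
    (hker : ∀ a : ↥Z, (a : G) ∈ N ↔ a ∈ φ.ker) :
    Nat.card (RepIdx G Z φ) = nIGZ (G ⧸ N) (Z.map (QuotientGroup.mk' N)) ⊥ := by
  rw [nIGZ]
  refine Nat.card_eq_of_bijective (Quotient.map
    (fun K => (⟨ConjClasses.map (QuotientGroup.mk' N) K.1,
      ann_bot Z φ N hZ hNZ hker K.2⟩ :
      {Kb : ConjClasses (G ⧸ N) // annZ (Z.map (QuotientGroup.mk' N)) Kb = ⊥}))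
    ?_) ⟨?_, ?_⟩
  · rintro ⟨K, hK⟩ ⟨L, hL⟩ ⟨z, hzZ, hz⟩
    refine ⟨(QuotientGroup.mk' N) z, ⟨z, hzZ, rfl⟩, ?_⟩
    show ((QuotientGroup.mk' N) z) • (ConjClasses.map (QuotientGroup.mk' N) K).carrier
      = (ConjClasses.map (QuotientGroup.mk' N) L).carrier
    rw [carrier_map, carrier_map, smul_image, hz]
  · intro q₁ q₂
    induction q₁ using Quotient.ind with | _ a =>
    induction q₂ using Quotient.ind with | _ b =>
    intro h
    obtain ⟨zb, hzbZ, hzb⟩ := Quotient.exact h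
    obtain ⟨z, hzZ, rfl⟩ := hzbZ
    apply Quotient.sound
    have hzb2 : (QuotientGroup.mk' N) '' (z • a.1.carrier)
        = (QuotientGroup.mk' N) '' b.1.carrier := by
      rw [← smul_image]
      rw [carrier_map, carrier_map] at hzb
      exact hzb
    obtain ⟨M, hM⟩ := exists_smul_carrier (hZ hzZ) a.1
    rw [hM] at hzb2
    obtain ⟨n, hnN, hnM⟩ := (image_eq_iff N (le_trans hNZ hZ)).1 hzb2
    refine ⟨n * z, mul_mem (hNZ hnN) hzZ, ?_⟩
    rw [mul_smul, hM, hnM]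
  · intro q
    induction q using Quotient.ind with | _ b =>
    obtain ⟨Kb, hKb⟩ := b
    obtain ⟨K, rfl⟩ := ConjClasses.map_surjective (QuotientGroup.mk'_surjective N) Kb
    exact ⟨Quotient.mk _ ⟨K, ann_le Z φ N hZ hNZ hker hKb⟩, by rw [Quotient.map_mk]⟩

end Quot

end Harada

end Aux


/-- `B(G)_φ` is a basis of `e_φ Z(ℂG)`, whose dimension is
`|I(G/ker φ : Z/ker φ)_{1}|`. -/
theorem stmt8 (G : Type*) [Group G] [Finite G] (Z : Subgroup G)
    (hZ : Z ≤ Subgroup.center G) (φ : ↥Z →* ℂˣ)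
    [hN : ((φ.ker).map Z.subtype).Normal] :
    LinearIndependent ℂ (fun o : RepIdx G Z φ => ephi Z φ * classSum (repClass o)) ∧
      Submodule.span ℂ
          (Set.range fun o : RepIdx G Z φ => ephi Z φ * classSum (repClass o)) =
        Submodule.map (LinearMap.mulLeft ℂ (ephi Z φ))
          (Subalgebra.center ℂ (MonoidAlgebra ℂ G)).toSubmodule ∧
      Module.finrank ℂ
          ↥(Submodule.map (LinearMap.mulLeft ℂ (ephi Z φ))
            (Subalgebra.center ℂ (MonoidAlgebra ℂ G)).toSubmodule) =
        nIGZ (G ⧸ φ.ker.map Z.subtype)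
          (Z.map (QuotientGroup.mk' (φ.ker.map Z.subtype))) ⊥ := by
  classical
  refine ⟨Harada.li Z φ hZ, Harada.span_eq Z φ hZ, ?_⟩
  rw [← Harada.span_eq Z φ hZ]
  letI : Fintype (RepIdx G Z φ) := Fintype.ofFinite _
  rw [finrank_span_eq_card (Harada.li Z φ hZ), ← Nat.card_eq_fintype_card]
  exact Harada.card_eq Z φ (φ.ker.map Z.subtype) hZ (Subgroup.map_subtype_le _)
    (fun a => ⟨Harada.mem_ker_of_coe_mem Z φ, fun h => ⟨a, h, rfl⟩⟩)
end

section
/- Let G be a finite group, Z ≤ Z(G), and φ ∈ Irr(Z) with kernel N. Then c_φ(G) = c_{φ̄}(G/N), where φ̄ is the faithful character of Z/N induced by φ; here c_φ(G) = ∏_{X ≤ N} ∏_{i ∈ I(G:Z)_X} |C_G(g_i)|·|Z/X|^{-1}. -/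
open scoped Pointwise BigOperators

set_option synthInstance.maxHeartbeats 1000000
set_option maxHeartbeats 1000000

namespace Stmt11Aux

open Pointwise Function

variable {G : Type*} [Group G]

theorem carrier_mk_eq {K : ConjClasses G} {k : G} (h : k ∈ K.carrier) :
    ConjClasses.mk k = K := ConjClasses.mem_carrier_iff_mk_eq.1 h

theorem mk_out_eq (K : ConjClasses G) : ConjClasses.mk (Quotient.out K) = K :=
  Quotient.out_eq K

theorem out_mem_carrier (K : ConjClasses G) : Quotient.out K ∈ K.carrier :=
  ConjClasses.mem_carrier_iff_mk_eq.2 (mk_out_eq K)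

theorem key_central {m : G} (hm : m ∈ Subgroup.center G) (c x : G) :
    c * (m * x) * c⁻¹ = m * (c * x * c⁻¹) := by
  have h := (Subgroup.mem_center_iff.1 hm) c
  rw [← mul_assoc, h, mul_assoc m, mul_assoc m]

theorem carrier_mk_mul_central {m : G} (hm : m ∈ Subgroup.center G) (k : G) :
    (ConjClasses.mk (m * k)).carrier = m • (ConjClasses.mk k).carrier := by
  ext x
  constructor
  · intro hx
    rw [ConjClasses.mem_carrier_iff_mk_eq, ConjClasses.mk_eq_mk_iff_isConj, isConj_iff] at hx
    obtain ⟨c, hc⟩ := hx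
    refine ⟨c⁻¹ * k * c, ?_, ?_⟩
    · rw [ConjClasses.mem_carrier_iff_mk_eq, ConjClasses.mk_eq_mk_iff_isConj, isConj_iff]
      exact ⟨c, by group⟩
    · show m • (c⁻¹ * k * c) = x
      rw [smul_eq_mul]
      have h2 := key_central hm c⁻¹ k
      rw [inv_inv] at h2
      rw [← h2, ← hc]
      group
  · rintro ⟨y, hy, rfl⟩
    rw [ConjClasses.mem_carrier_iff_mk_eq, ConjClasses.mk_eq_mk_iff_isConj, isConj_iff] at hy ⊢
    obtain ⟨c, hc⟩ := hy
    refine ⟨c, ?_⟩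
    show c * (m • y) * c⁻¹ = m * k
    rw [smul_eq_mul, key_central hm c y, hc]

theorem smul_carrier_central {m : G} (hm : m ∈ Subgroup.center G) (k : G) :
    m • (ConjClasses.mk k).carrier = (ConjClasses.mk (m * k)).carrier :=
  (carrier_mk_mul_central hm k).symm

theorem card_smul_set (a : G) (S : Set G) : Nat.card ↥(a • S) = Nat.card ↥S := by
  rw [← Set.image_smul]
  exact (Nat.card_congr (Equiv.Set.image _ S (MulAction.injective a))).symm

theorem carrier_map {H : Type*} [Group H] {f : G →* H} (hf : Surjective f)
    (K : ConjClasses G) : (ConjClasses.map f K).carrier = f '' K.carrier := by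
  obtain ⟨k, rfl⟩ := ConjClasses.mk_surjective K
  have hmk : ConjClasses.map f (ConjClasses.mk k) = ConjClasses.mk (f k) := rfl
  rw [hmk]
  ext x
  constructor
  · intro hx
    rw [ConjClasses.mem_carrier_iff_mk_eq, ConjClasses.mk_eq_mk_iff_isConj, isConj_iff] at hx
    obtain ⟨c, hc⟩ := hx
    obtain ⟨d, rfl⟩ := hf c
    refine ⟨d⁻¹ * k * d, ?_, ?_⟩
    · rw [ConjClasses.mem_carrier_iff_mk_eq, ConjClasses.mk_eq_mk_iff_isConj, isConj_iff]
      exact ⟨d, by group⟩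
    · rw [map_mul, map_mul, map_inv, ← hc]
      group
  · rintro ⟨y, hy, rfl⟩
    rw [ConjClasses.mem_carrier_iff_mk_eq, ConjClasses.mk_eq_mk_iff_isConj] at hy ⊢
    exact f.map_isConj hy

theorem image_smul_set {H : Type*} [Group H] (f : G →* H) (a : G) (S : Set G) :
    f '' (a • S) = f a • (f '' S) := by
  ext x
  constructor
  · rintro ⟨y, ⟨s, hs, rfl⟩, rfl⟩
    exact ⟨f s, Set.mem_image_of_mem f hs, by simp [smul_eq_mul, map_mul]⟩
  · rintro ⟨y, ⟨s, hs, rfl⟩, rfl⟩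
    exact ⟨a * s, ⟨s, hs, rfl⟩, by simp [smul_eq_mul, map_mul]⟩

theorem mem_annZ {Z : Subgroup G} {K : ConjClasses G} {z : ↥Z} :
    z ∈ annZ Z K ↔ (z : G) • K.carrier = K.carrier := Iff.rfl

theorem card_centralizer_mul_card_carrier [Finite G] (g : G) :
    Nat.card (Subgroup.centralizer ({g} : Set G)) * Nat.card (ConjClasses.mk g).carrier
      = Nat.card G := by
  classical
  cases nonempty_fintype G
  letI : Fintype (ConjAct G) := Fintype.ofEquiv G ConjAct.toConjAct.toEquiv
  letI : Fintype ↥(MulAction.orbit (ConjAct G) g) := Fintype.ofFinite _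
  letI : Fintype ↥(MulAction.stabilizer (ConjAct G) g) := Fintype.ofFinite _
  have h2 := MulAction.card_orbit_mul_card_stabilizer_eq_card_group (ConjAct G) g
  have h1 : Nat.card (Subgroup.centralizer ({g} : Set G)) =
      Nat.card (MulAction.stabilizer (ConjAct G) g) := by
    rw [Subgroup.centralizer_eq_comap_stabilizer]
    exact Nat.card_congr
      ⟨fun x => ⟨ConjAct.toConjAct (x : G), Subgroup.mem_comap.1 x.2⟩,
       fun y => ⟨ConjAct.ofConjAct (y : ConjAct G), Subgroup.mem_comap.2 (by exact y.2)⟩,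
       fun x => by ext; simp, fun y => by simp⟩
  have h4 : Nat.card G = Nat.card (ConjAct G) := Nat.card_congr ConjAct.toConjAct.toEquiv
  rw [h1, h4, ← ConjAct.orbit_eq_carrier_conjClasses]
  rw [Nat.card_eq_fintype_card, Nat.card_eq_fintype_card, Nat.card_eq_fintype_card]
  rw [mul_comm]
  exact h2

end Stmt11Aux
namespace Stmt11Aux

open Pointwise Function

variable {G : Type*} [Group G]

theorem card_carrier_eq_mul {H : Type*} [Group H] (Z : Subgroup G)
    (hZ : Z ≤ Subgroup.center G) (φ : ↥Z →* ℂˣ) (f : G →* H)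
    (hker : f.ker = φ.ker.map Z.subtype)
    (K : ConjClasses G) (hK : annZ Z K ≤ φ.ker) :
    Nat.card ↥K.carrier = Nat.card ↥(annZ Z K) * Nat.card ↥(⇑f '' K.carrier) := by
  classical
  let p : ↥K.carrier → ↥(⇑f '' K.carrier) := fun x => ⟨f ↑x, ⟨↑x, x.2, rfl⟩⟩
  have hy2 : ∀ y : ↥(⇑f '' K.carrier), ∃ x, x ∈ K.carrier ∧ f x = ↑y := fun y => y.2
  choose kk hkk1 hkk2 using hy2
  have hfk : ∀ m : ↥(annZ Z K), f ((m : ↥Z) : G) = 1 := by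
    intro m
    have h1 : (m : ↥Z) ∈ φ.ker := hK m.2
    have h2 : ((m : ↥Z) : G) ∈ f.ker := by
      rw [hker]; exact Subgroup.mem_map_of_mem _ h1
    exact MonoidHom.mem_ker.1 h2
  have hmem : ∀ (y) (m : ↥(annZ Z K)), ((m : ↥Z) : G) * kk y ∈ K.carrier := by
    intro y m
    have h1 : ((m : ↥Z) : G) • K.carrier = K.carrier := mem_annZ.1 m.2
    have h2 := Set.smul_mem_smul_set (a := ((m : ↥Z) : G)) (hkk1 y)
    rw [h1] at h2
    exact h2
  let θ : ∀ y : ↥(⇑f '' K.carrier), ↥(annZ Z K) → {x : ↥K.carrier // p x = y} :=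
    fun y m => ⟨⟨((m : ↥Z) : G) * kk y, hmem y m⟩, by
      apply Subtype.ext
      show f (((m : ↥Z) : G) * kk y) = ↑y
      rw [map_mul, hfk m, one_mul, hkk2]⟩
  have hbij : ∀ y, Function.Bijective (θ y) := by
    intro y
    constructor
    · intro m m' h
      have h1 : ((((θ y m) : {x : ↥K.carrier // p x = y}) : ↥K.carrier) : G)
          = ((((θ y m') : {x : ↥K.carrier // p x = y}) : ↥K.carrier) : G) := by rw [h]
      have h2 : ((m : ↥Z) : G) = ((m' : ↥Z) : G) := mul_right_cancel h1
      exact Subtype.ext (Subtype.ext h2)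
    · rintro ⟨⟨x, hxK⟩, hpx⟩
      have hfx : f x = f (kk y) := by
        have h3 : f x = ↑y := congrArg Subtype.val hpx
        rw [h3, hkk2]
      have hker' : x * (kk y)⁻¹ ∈ f.ker := by
        rw [MonoidHom.mem_ker, map_mul, map_inv, hfx, mul_inv_cancel]
      rw [hker] at hker'
      obtain ⟨z, hzker, hz⟩ := hker'
      have hzx : (z : G) * kk y = x := by
        have h4 : (z : G) = x * (kk y)⁻¹ := hz
        rw [h4, inv_mul_cancel_right]
      have hzann : z ∈ annZ Z K := by
        rw [mem_annZ]
        have hc : (z : G) ∈ Subgroup.center G := hZ z.2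
        calc (z : G) • K.carrier = (z : G) • (ConjClasses.mk (kk y)).carrier := by
              rw [carrier_mk_eq (hkk1 y)]
          _ = (ConjClasses.mk ((z : G) * kk y)).carrier := smul_carrier_central hc _
          _ = K.carrier := by rw [hzx, carrier_mk_eq hxK]
      refine ⟨⟨z, hzann⟩, ?_⟩
      apply Subtype.ext; apply Subtype.ext
      exact hzx
  calc Nat.card ↥K.carrier
      = Nat.card (Σ y : ↥(⇑f '' K.carrier), {x : ↥K.carrier // p x = y}) :=
        (Nat.card_congr (Equiv.sigmaFiberEquiv p)).symm
    _ = Nat.card (↥(⇑f '' K.carrier) × ↥(annZ Z K)) :=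
        Nat.card_congr ((Equiv.sigmaCongrRight fun y =>
          (Equiv.ofBijective _ (hbij y)).symm).trans (Equiv.sigmaEquivProd _ _))
    _ = Nat.card ↥(annZ Z K) * Nat.card ↥(⇑f '' K.carrier) := by
        rw [Nat.card_prod, mul_comm]

theorem exists_translate {H : Type*} [Group H] (Z : Subgroup G)
    (hZ : Z ≤ Subgroup.center G) (φ : ↥Z →* ℂˣ) {f : G →* H} (hf : Surjective f)
    (hker : f.ker = φ.ker.map Z.subtype)
    {z : G} (hz : z ∈ Z) {K₁ K₂ : ConjClasses G}
    (h : f z • (ConjClasses.map f K₁).carrier = (ConjClasses.map f K₂).carrier) :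
    ∃ z' : ↥Z, ((z' : G) • K₁.carrier = K₂.carrier ∧ f (z' : G) = f z) := by
  obtain ⟨k₁, rfl⟩ := ConjClasses.mk_surjective K₁
  have h1 : f (z * k₁) ∈ (ConjClasses.map f K₂).carrier := by
    rw [← h, carrier_map hf, map_mul]
    exact Set.smul_mem_smul_set (Set.mem_image_of_mem f ConjClasses.mem_carrier_mk)
  rw [carrier_map hf] at h1
  obtain ⟨k₂, hk₂K, hk₂⟩ := h1
  have hker' : z * k₁ * k₂⁻¹ ∈ f.ker := by
    rw [MonoidHom.mem_ker, map_mul, map_inv, hk₂, mul_inv_cancel]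
  rw [hker] at hker'
  obtain ⟨z₀, hz₀ker, hz₀⟩ := hker'
  have hz₀' : (z₀ : G) * k₂ = z * k₁ := by
    have h4 : (z₀ : G) = z * k₁ * k₂⁻¹ := hz₀
    rw [h4, inv_mul_cancel_right]
  have hfz₀ : f (z₀ : G) = 1 := by
    have : (z₀ : G) ∈ f.ker := by rw [hker]; exact Subgroup.mem_map_of_mem _ hz₀ker
    exact MonoidHom.mem_ker.1 this
  have hcz : z ∈ Subgroup.center G := hZ hz
  have hcz₀ : (z₀ : G) ∈ Subgroup.center G := hZ z₀.2
  have e1 : z • (ConjClasses.mk k₁).carrier = (z₀ : G) • K₂.carrier := by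
    rw [smul_carrier_central hcz k₁, ← hz₀', carrier_mk_mul_central hcz₀ k₂,
      carrier_mk_eq hk₂K]
  refine ⟨z₀⁻¹ * ⟨z, hz⟩, ?_, ?_⟩
  · show ((z₀ : G)⁻¹ * z) • (ConjClasses.mk k₁).carrier = K₂.carrier
    rw [mul_smul, e1, inv_smul_smul]
  · show f ((z₀ : G)⁻¹ * z) = f z
    rw [map_mul, map_inv, hfz₀, inv_one, one_mul]

end Stmt11Aux
namespace Stmt11Aux

open Pointwise Function

theorem cPhi_map {G : Type*} [Group G] [Finite G] {H : Type*} [Group H]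
    (Z : Subgroup G) (hZ : Z ≤ Subgroup.center G) (φ : ↥Z →* ℂˣ)
    (f : G →* H) (hf : Surjective f) (hker : f.ker = φ.ker.map Z.subtype)
    (ψ : ↥(Z.map f) →* ℂˣ)
    (hψ : ∀ (z : ↥Z) (w : ↥(Z.map f)), (w : H) = f (z : G) → ψ w = φ z) :
    cPhi G Z φ = cPhi H (Z.map f) ψ := by
  classical
  haveI hHfin : Finite H := Finite.of_surjective f hf
  have hZb : Z.map f ≤ Subgroup.center H := by
    rintro w hw
    obtain ⟨z, hzZ, rfl⟩ := hw
    rw [Subgroup.mem_center_iff]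
    intro h
    obtain ⟨g, rfl⟩ := hf h
    rw [← map_mul, ← map_mul, Subgroup.mem_center_iff.1 (hZ hzZ) g]
  have hψbot : ψ.ker = ⊥ := by
    rw [eq_bot_iff]
    rintro w hw
    obtain ⟨z, hzZ, hzw⟩ := w.2
    have h1 : ψ w = φ ⟨z, hzZ⟩ := hψ ⟨z, hzZ⟩ w hzw.symm
    have h2 : (⟨z, hzZ⟩ : ↥Z) ∈ φ.ker := by
      rw [MonoidHom.mem_ker, ← h1]; exact hw
    have h3 : z ∈ f.ker := by
      rw [hker]; exact Subgroup.mem_map_of_mem _ h2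
    have h4 : (w : H) = 1 := by rw [← hzw]; exact MonoidHom.mem_ker.1 h3
    exact Subgroup.mem_bot.2 (Subtype.ext (by simpa using h4))
  have hcond : ∀ K : ConjClasses G, annZ Z K ≤ φ.ker →
      annZ (Z.map f) (ConjClasses.map f K) ≤ ψ.ker := by
    intro K hK w hw
    rw [mem_annZ] at hw
    obtain ⟨z, hzZ, hzw⟩ := w.2
    rw [← hzw] at hw
    obtain ⟨z', hz'1, hz'2⟩ := exists_translate Z hZ φ hf hker hzZ (K₁ := K) (K₂ := K) hw
    have hz'ker : z' ∈ φ.ker := hK (mem_annZ.2 hz'1)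
    have h5 : ((z'⁻¹ * ⟨z, hzZ⟩ : ↥Z) : G) ∈ f.ker := by
      rw [MonoidHom.mem_ker]
      show f ((z' : G)⁻¹ * z) = 1
      rw [map_mul, map_inv, hz'2, inv_mul_cancel]
    rw [hker] at h5
    have h6 : z'⁻¹ * ⟨z, hzZ⟩ ∈ φ.ker := by
      obtain ⟨u, hu, hu2⟩ := h5
      have h7 : u = z'⁻¹ * ⟨z, hzZ⟩ := Subtype.ext hu2
      rwa [← h7]
    have h7 : (⟨z, hzZ⟩ : ↥Z) ∈ φ.ker := by
      have h8 := mul_mem hz'ker h6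
      rwa [mul_inv_cancel_left] at h8
    rw [MonoidHom.mem_ker, hψ ⟨z, hzZ⟩ w hzw.symm]
    exact MonoidHom.mem_ker.1 h7
  let e : RepIdx G Z φ → RepIdx H (Z.map f) ψ :=
    Quotient.map' (fun K => ⟨ConjClasses.map f K.1, hcond K.1 K.2⟩)
      (by
        rintro K L ⟨z, hzZ, hzc⟩
        exact ⟨f z, Subgroup.mem_map_of_mem f hzZ, by
          rw [carrier_map hf, carrier_map hf, ← image_smul_set, hzc]⟩)
  have hesurj : Surjective e := by
    intro q
    induction q using Quotient.inductionOn' with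
    | h Lp =>
      obtain ⟨L, hL⟩ := Lp
      obtain ⟨l, rfl⟩ := ConjClasses.mk_surjective L
      obtain ⟨g₀, rfl⟩ := hf l
      have hK : annZ Z (ConjClasses.mk g₀) ≤ φ.ker := by
        intro z hz
        have hz' : (f (z : G)) • (ConjClasses.map f (ConjClasses.mk g₀)).carrier
            = (ConjClasses.map f (ConjClasses.mk g₀)).carrier := by
          rw [carrier_map hf, ← image_smul_set, mem_annZ.1 hz]
        have hw : (⟨f (z : G), Subgroup.mem_map_of_mem f z.2⟩ : ↥(Z.map f)) ∈
            annZ (Z.map f) (ConjClasses.map f (ConjClasses.mk g₀)) := mem_annZ.2 hz'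
        have h9 : ψ ⟨f (z : G), Subgroup.mem_map_of_mem f z.2⟩ = 1 :=
          MonoidHom.mem_ker.1 (hL hw)
        have h10 := hψ z ⟨f (z : G), Subgroup.mem_map_of_mem f z.2⟩ rfl
        rw [MonoidHom.mem_ker, ← h10]
        exact h9
      refine ⟨Quotient.mk'' ⟨ConjClasses.mk g₀, hK⟩, ?_⟩
      show Quotient.map' _ _ (Quotient.mk'' _) = _
      rw [Quotient.map'_mk'']
      exact congrArg Quotient.mk'' (Subtype.ext rfl)
  have heinj : Injective e := by
    intro q₁ q₂ h
    induction q₁ using Quotient.inductionOn' with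
    | h K₁p =>
      induction q₂ using Quotient.inductionOn' with
      | h K₂p =>
        simp only [e, Quotient.map'_mk''] at h
        obtain ⟨w, hwZb, hwc⟩ := Quotient.exact' h
        obtain ⟨z, hzZ, rfl⟩ := hwZb
        obtain ⟨z', hz'1, _⟩ := exists_translate Z hZ φ hf hker hzZ hwc
        exact Quotient.sound' ⟨(z' : G), SetLike.coe_mem z', hz'1⟩
  have hfac : ∀ o : RepIdx G Z φ,
      ((Nat.card (Subgroup.centralizer {Quotient.out (repClass o)} : Subgroup G) : ℚ) /
        ((annZ Z (repClass o)).index : ℚ)) =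
      ((Nat.card (Subgroup.centralizer {Quotient.out (repClass (e o))} : Subgroup H) : ℚ) /
        ((annZ (Z.map f) (repClass (e o))).index : ℚ)) := by
    intro o
    set K : ConjClasses G := repClass o with hKdef
    have hK : annZ Z K ≤ φ.ker := (Quotient.out o).2
    set L : ConjClasses H := repClass (e o) with hLdef
    have hL : annZ (Z.map f) L ≤ ψ.ker := (Quotient.out (e o)).2
    have hrel : ∃ w ∈ Z.map f, w • L.carrier = (ConjClasses.map f K).carrier := by
      have h1 : Quotient.mk'' (Quotient.out (e o)) = e o := Quotient.out_eq' (e o)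
      have h2 : e o = (Quotient.mk'' ⟨ConjClasses.map f K, hcond K hK⟩ :
          RepIdx H (Z.map f) ψ) := by
        conv_lhs => rw [← (Quotient.out_eq' o : Quotient.mk'' (Quotient.out o) = o)]
        exact Quotient.map'_mk'' _ _ _
      exact Quotient.exact' (h1.trans h2)
    obtain ⟨w, hwZb, hwc⟩ := hrel
    -- cardinality facts
    set x := Nat.card ↥(annZ Z K) with hxdef
    set ℓ := Nat.card ↥((ConjClasses.map f K).carrier) with hldef
    set n := Nat.card f.ker with hndef
    set zc := Nat.card ↥Z with hzcdef
    set zb := Nat.card ↥(Z.map f) with hzbdef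
    set cenK := Nat.card (Subgroup.centralizer {Quotient.out K} : Subgroup G) with hcenK
    set cenL := Nat.card (Subgroup.centralizer {Quotient.out L} : Subgroup H) with hcenL
    set idx1 := (annZ Z K).index with hidx1
    set idx2 := (annZ (Z.map f) L).index with hidx2
    have n1 : cenK * Nat.card ↥K.carrier = Nat.card G := by
      have h := card_centralizer_mul_card_carrier (Quotient.out K)
      rwa [mk_out_eq] at h
    have n2 : idx1 * x = zc := Subgroup.index_mul_card _
    have n3 : Nat.card ↥K.carrier = x * ℓ := by
      rw [hldef, carrier_map hf]
      exact card_carrier_eq_mul Z hZ φ f hker K hK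
    have n4 : cenL * Nat.card ↥L.carrier = Nat.card H := by
      have h := card_centralizer_mul_card_carrier (Quotient.out L)
      rwa [mk_out_eq] at h
    have hcardL : Nat.card ↥L.carrier = ℓ := by
      rw [hldef, ← hwc, card_smul_set]
    have n6 : Nat.card H * n = Nat.card G := by
      have h1 : Nat.card G = Nat.card (G ⧸ f.ker) * Nat.card f.ker :=
        Subgroup.card_eq_card_quotient_mul_card_subgroup _
      have h2 : Nat.card (G ⧸ f.ker) = Nat.card H :=
        Nat.card_congr (QuotientGroup.quotientKerEquivOfSurjective f hf).toEquiv
      rw [h1, h2]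
    have n7 : idx2 = zb := by
      have hbot : annZ (Z.map f) L = ⊥ := le_bot_iff.1 (hψbot ▸ hL)
      rw [hidx2, hbot, Subgroup.index_bot]
    have n8 : zb * n = zc := by
      set f0 := f.comp Z.subtype with hf0
      have hr : f0.range = Z.map f := by
        rw [hf0, MonoidHom.range_comp, Subgroup.range_subtype]
      have hk0 : f0.ker = φ.ker := by
        ext z
        have hzz : z ∈ f0.ker ↔ (z : G) ∈ f.ker := Iff.rfl
        rw [hzz, hker]
        constructor
        · rintro ⟨u, hu, hu2⟩
          rwa [← (Subtype.ext hu2 : u = z)]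
        · intro h
          exact Subgroup.mem_map_of_mem _ h
      have hcker : n = Nat.card φ.ker := by
        rw [hndef, hker]
        exact (Nat.card_congr (Subgroup.equivMapOfInjective φ.ker Z.subtype
          Subtype.coe_injective).toEquiv).symm
      have h1 : Nat.card ↥Z = Nat.card (↥Z ⧸ f0.ker) * Nat.card f0.ker :=
        Subgroup.card_eq_card_quotient_mul_card_subgroup _
      have h2 : Nat.card (↥Z ⧸ f0.ker) = zb := by
        rw [Nat.card_congr (QuotientGroup.quotientKerEquivRange f0).toEquiv, hr]
      rw [hzcdef, h1, h2, hk0, ← hcker]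
    -- positivity
    haveI : Nonempty ↥K.carrier := ⟨⟨Quotient.out K, out_mem_carrier K⟩⟩
    haveI : Nonempty ↥((ConjClasses.map f K).carrier) :=
      ⟨⟨Quotient.out (ConjClasses.map f K), out_mem_carrier _⟩⟩
    have px : 0 < x := Nat.card_pos
    have pl : 0 < ℓ := Nat.card_pos
    have pn : 0 < n := Nat.card_pos
    have pidx1 : idx1 ≠ 0 := Subgroup.index_ne_zero_of_finite
    have pidx2 : idx2 ≠ 0 := Subgroup.index_ne_zero_of_finite
    have key2 : cenL * ℓ = Nat.card H := by rw [← hcardL]; exact n4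
    have key : cenK * idx2 * (x * ℓ * n) = cenL * idx1 * (x * ℓ * n) := by
      calc cenK * idx2 * (x * ℓ * n) = (cenK * (x * ℓ)) * (idx2 * n) := by ring
        _ = Nat.card G * zc := by rw [← n3, n1, n7, n8]
        _ = Nat.card H * (zc * n) := by rw [← n6]; ring
        _ = (cenL * ℓ) * ((idx1 * x) * n) := by rw [key2, n2]
        _ = cenL * idx1 * (x * ℓ * n) := by ring
    have keyq : cenK * idx2 = cenL * idx1 :=
      Nat.eq_of_mul_eq_mul_right (by positivity) key
    rw [div_eq_div_iff (by exact_mod_cast pidx1) (by exact_mod_cast pidx2)]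
    exact_mod_cast keyq
  unfold cPhi
  exact finprod_eq_of_bijective e ⟨heinj, hesurj⟩ hfac

end Stmt11Aux


/-- `c_φ(G) = c_φ̄(G/N)` where `N = ker φ`. -/
theorem stmt11 (G : Type*) [Group G] [Finite G] (Z : Subgroup G)
    (hZ : Z ≤ Subgroup.center G) (φ : ↥Z →* ℂˣ)
    [hN : ((φ.ker).map Z.subtype).Normal]
    (φbar : ↥(Z.map (QuotientGroup.mk' (φ.ker.map Z.subtype))) →* ℂˣ)
    (hφbar : ∀ (z : ↥Z) (w : ↥(Z.map (QuotientGroup.mk' (φ.ker.map Z.subtype)))),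
      (w : G ⧸ φ.ker.map Z.subtype) = QuotientGroup.mk (z : G) → φbar w = φ z) :
    cPhi G Z φ =
      cPhi (G ⧸ φ.ker.map Z.subtype)
        (Z.map (QuotientGroup.mk' (φ.ker.map Z.subtype))) φbar := by
  exact Stmt11Aux.cPhi_map Z hZ φ (QuotientGroup.mk' (φ.ker.map Z.subtype))
    (QuotientGroup.mk'_surjective _) (QuotientGroup.ker_mk' _) φbar
    (fun z w h => hφbar z w h)
end

section
/- Let A be a finite abelian group and Z ≤ A a subgroup. For every φ ∈ Irr(Z), μ_φ(A) = 1; in particular γ_φ(A) = c_φ(A) = |A/Z|^{|A/Z|}. -/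
open scoped Pointwise BigOperators

set_option synthInstance.maxHeartbeats 1000000
set_option maxHeartbeats 1000000

noncomputable section Stmt14Aux
open scoped Pointwise

variable {A : Type*} [CommGroup A]

section TraceAux
variable [Fintype A]

/-- The standard basis of the group algebra. -/
def magBasis (A : Type*) [CommGroup A] : Module.Basis A ℂ (MonoidAlgebra ℂ A) :=
  Module.Basis.ofRepr (MonoidAlgebra.coeffLinearEquiv ℂ : MonoidAlgebra ℂ A ≃ₗ[ℂ] (A →₀ ℂ))

lemma trace_mulLeft (x : MonoidAlgebra ℂ A) :
    LinearMap.trace ℂ (MonoidAlgebra ℂ A) (LinearMap.mulLeft ℂ x)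
      = (Fintype.card A : ℂ) * x.coeff 1 := by
  classical
  rw [LinearMap.trace_eq_matrix_trace ℂ (magBasis A), Matrix.trace]
  have h : ∀ g : A, (LinearMap.toMatrix (magBasis A) (magBasis A)
      (LinearMap.mulLeft ℂ x)) g g = x.coeff 1 := by
    intro g
    rw [LinearMap.toMatrix_apply]
    show ((x * MonoidAlgebra.single g 1 : MonoidAlgebra ℂ A)).coeff g = x.coeff 1
    rw [MonoidAlgebra.coeff_mul_single_apply, mul_inv_cancel, mul_one]
  simp only [Matrix.diag_apply, h]
  rw [Finset.sum_const, Finset.card_univ, nsmul_eq_mul]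

lemma trace_centerMulHom (x : MonoidAlgebra ℂ A) :
    LinearMap.trace ℂ _ (centerMulHom x) = (Fintype.card A : ℂ) * x.coeff 1 := by
  have hc : Subalgebra.center ℂ (MonoidAlgebra ℂ A) = ⊤ :=
    Subalgebra.center_eq_top (R := ℂ) (MonoidAlgebra ℂ A)
  have hx : x ∈ Subalgebra.center ℂ (MonoidAlgebra ℂ A) := by rw [hc]; exact Algebra.mem_top
  rw [centerMulHom, dif_pos hx]
  let e : Subalgebra.center ℂ (MonoidAlgebra ℂ A) ≃ₗ[ℂ] MonoidAlgebra ℂ A :=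
    ((Subalgebra.equivOfEq _ _ hc).trans Subalgebra.topEquiv).toLinearEquiv
  have he : ∀ v : Subalgebra.center ℂ (MonoidAlgebra ℂ A), e v = (v : MonoidAlgebra ℂ A) :=
    fun v => rfl
  have key : LinearMap.mulLeft ℂ (⟨x, hx⟩ : Subalgebra.center ℂ (MonoidAlgebra ℂ A)) =
      e.symm.conj (LinearMap.mulLeft ℂ x) := by
    refine LinearMap.ext fun v => e.injective ?_
    simp only [LinearEquiv.conj_apply, LinearMap.coe_comp, Function.comp_apply,
      LinearEquiv.coe_coe, LinearEquiv.apply_symm_apply, LinearMap.mulLeft_apply,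
      LinearEquiv.symm_symm]
    rw [he]
    rfl
  rw [key, LinearMap.trace_conj', trace_mulLeft]

lemma gaStar_mul_apply_one (u v : MonoidAlgebra ℂ A) :
    (gaStar u * v).coeff 1 = ∑ g : A, (starRingEnd ℂ) (u.coeff g) * v.coeff g := by
  rw [gaStar, finsum_eq_sum_of_fintype, Finset.sum_mul, MonoidAlgebra.coeff_sum, Finsupp.finset_sum_apply]
  refine Finset.sum_congr rfl fun g _ => ?_
  rw [MonoidAlgebra.coeff_single_mul_apply, inv_inv, mul_one]

lemma hform_eq (u v : MonoidAlgebra ℂ A) :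
    hform u v = (Fintype.card A : ℂ) * ∑ g : A, (starRingEnd ℂ) (u.coeff g) * v.coeff g := by
  rw [hform, trace_centerMulHom, gaStar_mul_apply_one]

lemma ephi_apply (Z : Subgroup A) (φ : ↥Z →* ℂˣ) (a : A) [Decidable (a ∈ Z)] :
    (ephi Z φ).coeff a = (Nat.card Z : ℂ)⁻¹ *
      (if h : a ∈ Z then (starRingEnd ℂ) ((φ ⟨a, h⟩ : ℂˣ) : ℂ) else 0) := by
  classical
  rw [ephi, finsum_eq_sum_of_fintype]
  show (Nat.card ↥Z : ℂ)⁻¹ * ((∑ z : ↥Z, MonoidAlgebra.single (z : A)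
    ((starRingEnd ℂ) ((φ z : ℂˣ) : ℂ)))).coeff a = _
  congr 1
  rw [MonoidAlgebra.coeff_sum, Finsupp.finset_sum_apply]
  by_cases h : a ∈ Z
  · rw [dif_pos h, Finset.sum_eq_single (⟨a, h⟩ : ↥Z)]
    · simp [Finsupp.single_apply]
    · intro z _ hz
      rw [MonoidAlgebra.coeff_single, Finsupp.single_apply, if_neg]
      intro hza
      exact hz (Subtype.ext hza)
    · simp
  · rw [dif_neg h]
    refine Finset.sum_eq_zero fun z _ => ?_
    rw [MonoidAlgebra.coeff_single, Finsupp.single_apply, if_neg]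
    rintro rfl
    exact h z.2

end TraceAux

lemma carrier_eq (c : ConjClasses A) : c.carrier = {Quotient.out c} := by
  have hout : ∀ d : ConjClasses A, ConjClasses.mk (Quotient.out d) = d := fun d => by
    rw [← ConjClasses.quotient_mk_eq_mk]; exact Quotient.out_eq d
  ext x
  rw [ConjClasses.mem_carrier_iff_mk_eq, Set.mem_singleton_iff]
  constructor
  · intro h
    exact ConjClasses.mk_injective (by rw [h, hout])
  · rintro rfl
    exact hout c

lemma classSum_eq (c : ConjClasses A) :
    classSum c = MonoidAlgebra.single (Quotient.out c) (1 : ℂ) := by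
  rw [classSum, carrier_eq, finsum_mem_singleton]

lemma annZ_eq_bot (Z : Subgroup A) (K : ConjClasses A) : annZ Z K = ⊥ := by
  ext z
  simp only [annZ, Subgroup.mem_comap, MulAction.mem_stabilizer_iff, Subgroup.mem_bot,
    Subgroup.coe_subtype]
  rw [carrier_eq, Set.smul_set_singleton, Set.singleton_eq_singleton_iff, smul_eq_mul,
    mul_eq_right]
  exact ⟨fun h => Subtype.ext h, fun h => by rw [h]; rfl⟩

variable (Z : Subgroup A) (φ : ↥Z →* ℂˣ)

lemma stmt14P (K : ConjClasses A) : annZ Z K ≤ φ.ker := by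
  rw [annZ_eq_bot]; exact bot_le

/-- The `Z`-orbits of conjugacy classes of an abelian group `A` biject with `A ⧸ Z`. -/
def repIdxEquiv : RepIdx A Z φ ≃ (A ⧸ Z) := by
  refine Equiv.ofBijective (Quotient.lift
    (fun K : {K : ConjClasses A // annZ Z K ≤ φ.ker} =>
      (QuotientGroup.mk (Quotient.out K.1) : A ⧸ Z)) ?_) ⟨?_, ?_⟩
  · rintro K L ⟨z, hz, h⟩
    rw [carrier_eq, carrier_eq, Set.smul_set_singleton, Set.singleton_eq_singleton_iff,
      smul_eq_mul] at h
    refine (QuotientGroup.eq).2 ?_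
    rw [← h, mul_comm z, inv_mul_cancel_left]
    exact hz
  · intro o o'
    refine Quotient.inductionOn₂ o o' fun K L h => ?_
    rw [Quotient.lift_mk, Quotient.lift_mk] at h
    refine Quotient.sound ⟨(Quotient.out K.1)⁻¹ * Quotient.out L.1, (QuotientGroup.eq).1 h, ?_⟩
    rw [carrier_eq, carrier_eq, Set.smul_set_singleton, Set.singleton_eq_singleton_iff,
      smul_eq_mul, mul_comm, mul_inv_cancel_left]
  · intro q
    refine Quotient.inductionOn q fun a => ?_
    refine ⟨Quotient.mk _ ⟨ConjClasses.mk a, stmt14P Z φ _⟩, ?_⟩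
    rw [Quotient.lift_mk]
    have : Quotient.out (ConjClasses.mk a) = a := by
      apply ConjClasses.mk_injective
      rw [← ConjClasses.quotient_mk_eq_mk]; exact Quotient.out_eq _
    rw [this]

lemma card_repIdx : Nat.card (RepIdx A Z φ) = Z.index := by
  rw [Nat.card_congr (repIdxEquiv Z φ)]
  rfl

lemma repIdx_eq_of_mem {o o' : RepIdx A Z φ}
    (h : Quotient.out (repClass o) * (Quotient.out (repClass o'))⁻¹ ∈ Z) : o = o' := by
  rw [← Quotient.out_equiv_out]
  refine ⟨Quotient.out (repClass o') * (Quotient.out (repClass o))⁻¹, ?_, ?_⟩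
  · have := inv_mem h
    rwa [mul_inv_rev, inv_inv] at this
  · show _ • (Quotient.out o).1.carrier = (Quotient.out o').1.carrier
    rw [show (Quotient.out o).1 = repClass o from rfl,
      show (Quotient.out o').1 = repClass o' from rfl, carrier_eq, carrier_eq,
      Set.smul_set_singleton, Set.singleton_eq_singleton_iff, smul_eq_mul,
      inv_mul_cancel_right]

lemma phi_mul_conj (z : ↥Z) [Finite A] :
    ((φ z : ℂˣ) : ℂ) * (starRingEnd ℂ) ((φ z : ℂˣ) : ℂ) = 1 := by
  have hpow : ((φ z : ℂˣ) : ℂ) ^ (Nat.card ↥Z) = 1 := by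
    have h1 : (φ z) ^ (Nat.card ↥Z) = 1 := by rw [← map_pow, pow_card_eq_one', map_one]
    have := congrArg (Units.val : ℂˣ → ℂ) h1
    simpa using this
  have habs : ‖((φ z : ℂˣ) : ℂ)‖ = 1 := by
    exact Complex.norm_eq_one_of_pow_eq_one hpow Nat.card_pos.ne'
  rw [Complex.mul_conj, Complex.normSq_eq_norm_sq, habs]
  norm_num

end Stmt14Aux

/-- for a finite abelian group `A`, any subgroup `Z` and any `φ ∈ Irr(Z)`,
`μ_φ(A) = 1`; in fact `γ_φ(A) = c_φ(A) = |A/Z|^{|A/Z|}`. -/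
theorem stmt14 (A : Type*) [CommGroup A] [Finite A] (Z : Subgroup A) (φ : ↥Z →* ℂˣ) :
    muPhi A Z φ = 1 ∧ gammaPhi A Z φ = (Z.index : ℝ) ^ Z.index ∧
      cPhi A Z φ = (Z.index : ℚ) ^ Z.index := by
  classical
  letI : Fintype A := Fintype.ofFinite A
  have hZ0 : (Nat.card ↥Z : ℂ) ≠ 0 := Nat.cast_ne_zero.2 Nat.card_pos.ne'
  have hZA : (Nat.card ↥Z : ℂ) * (Z.index : ℂ) = (Fintype.card A : ℂ) := by
    rw [← Nat.card_eq_fintype_card]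
    exact_mod_cast congrArg (Nat.cast : ℕ → ℂ) Z.card_mul_index
  -- the Gram matrix entries
  have hEntry : ∀ i j : RepIdx A Z φ,
      hform (ephi Z φ * classSum (repClass i)) (ephi Z φ * classSum (repClass j)) =
        if i = j then (Z.index : ℂ) else 0 := by
    intro i j
    set gi := Quotient.out (repClass i) with hgi
    set gj := Quotient.out (repClass j) with hgj
    rw [classSum_eq, classSum_eq, ← hgi, ← hgj, hform_eq]
    have hco : ∀ (g : A) (x : A),
        ((ephi Z φ * MonoidAlgebra.single g (1 : ℂ) : MonoidAlgebra ℂ A)).coeff x =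
          (ephi Z φ).coeff (x * g⁻¹) := by
      intro g x
      rw [MonoidAlgebra.coeff_mul_single_apply, mul_one]
    simp only [hco]
    by_cases hij : i = j
    · subst hij
      rw [if_pos rfl]
      have hre : (∑ x : A, (starRingEnd ℂ) ((ephi Z φ).coeff (x * gi⁻¹)) * (ephi Z φ).coeff (x * gi⁻¹)) =
          ∑ y : A, (starRingEnd ℂ) ((ephi Z φ).coeff y) * (ephi Z φ).coeff y :=
        Fintype.sum_equiv (Equiv.mulRight gi⁻¹) _ _ (fun x => rfl)
      rw [hre]
      have hterm : ∀ y : A, (starRingEnd ℂ) ((ephi Z φ).coeff y) * (ephi Z φ).coeff y =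
          if y ∈ Z then (Nat.card ↥Z : ℂ)⁻¹ * (Nat.card ↥Z : ℂ)⁻¹ else 0 := by
        intro y
        rw [ephi_apply]
        by_cases hy : y ∈ Z
        · rw [dif_pos hy, if_pos hy, map_mul, map_inv₀, map_natCast, Complex.conj_conj]
          linear_combination ((Nat.card ↥Z : ℂ)⁻¹ * (Nat.card ↥Z : ℂ)⁻¹) *
            phi_mul_conj Z φ ⟨y, hy⟩
        · rw [dif_neg hy, if_neg hy, mul_zero, map_zero, zero_mul]
      simp only [hterm]
      rw [Finset.sum_ite, Finset.sum_const, Finset.sum_const_zero, add_zero, nsmul_eq_mul]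
      have hcard : ((Finset.univ.filter (fun y : A => y ∈ Z)).card : ℂ) = (Nat.card ↥Z : ℂ) := by
        rw [Nat.card_eq_fintype_card, Fintype.card_subtype]
      rw [hcard, ← hZA]
      field_simp
    · rw [if_neg hij]
      rw [mul_eq_zero]
      right
      refine Finset.sum_eq_zero fun x _ => ?_
      by_cases h1 : x * gi⁻¹ ∈ Z
      · by_cases h2 : x * gj⁻¹ ∈ Z
        · exfalso
          apply hij
          apply repIdx_eq_of_mem (Z := Z) (φ := φ)
          have hmem : gi * gj⁻¹ = (x * gi⁻¹)⁻¹ * (x * gj⁻¹) := by group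
          rw [← hgi, ← hgj, hmem]
          exact mul_mem (inv_mem h1) h2
        · rw [ephi_apply Z φ (x * gj⁻¹), dif_neg h2, mul_zero, mul_zero]
      · rw [ephi_apply Z φ (x * gi⁻¹), dif_neg h1, mul_zero, map_zero, zero_mul]
  have hidx0 : (Z.index : ℝ) ≠ 0 := Nat.cast_ne_zero.2 Subgroup.index_ne_zero_of_finite
  -- gamma
  have hgamma : gammaPhi A Z φ = (Z.index : ℝ) ^ Z.index := by
    unfold gammaPhi
    letI : Fintype (RepIdx A Z φ) := Fintype.ofFinite _
    letI : DecidableEq (RepIdx A Z φ) := Classical.decEq _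
    have hM : (Matrix.of fun i j : RepIdx A Z φ =>
        hform (ephi Z φ * classSum (repClass i)) (ephi Z φ * classSum (repClass j))) =
        Matrix.diagonal (fun _ => (Z.index : ℂ)) := by
      ext i j
      rw [Matrix.of_apply, hEntry]
      by_cases hij : i = j
      · subst hij; rw [if_pos rfl, Matrix.diagonal_apply_eq]
      · rw [if_neg hij, Matrix.diagonal_apply_ne _ hij]
    rw [hM, Matrix.det_diagonal, Finset.prod_const, Finset.card_univ,
      ← Nat.card_eq_fintype_card, card_repIdx]
    rw [norm_pow, Complex.norm_natCast]
  -- cPhi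
  have hc : cPhi A Z φ = (Z.index : ℚ) ^ Z.index := by
    unfold cPhi
    have hfac : ∀ o : RepIdx A Z φ,
        ((Nat.card (Subgroup.centralizer {Quotient.out (repClass o)} : Subgroup A) : ℚ) /
          ((annZ Z (repClass o)).index : ℚ)) = (Z.index : ℚ) := by
      intro o
      rw [annZ_eq_bot, Subgroup.index_bot]
      have hcent : Subgroup.centralizer {Quotient.out (repClass o)} = (⊤ : Subgroup A) := by
        rw [Subgroup.centralizer_eq_top_iff_subset]
        intro x _
        exact Subgroup.mem_center_iff.2 fun g => mul_comm g x
      rw [hcent, Subgroup.card_top]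
      rw [div_eq_iff (by exact_mod_cast (Nat.card_pos (α := ↥Z)).ne')]
      rw [mul_comm]
      exact_mod_cast congrArg (Nat.cast : ℕ → ℚ) Z.card_mul_index.symm
    rw [finprod_congr hfac]
    letI : Fintype (RepIdx A Z φ) := Fintype.ofFinite _
    rw [finprod_eq_prod_of_fintype, Finset.prod_const, Finset.card_univ,
      ← Nat.card_eq_fintype_card, card_repIdx]
  refine ⟨?_, hgamma, hc⟩
  rw [muPhi, hgamma, hc]
  push_cast
  rw [div_self (pow_ne_zero _ hidx0)]
end
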